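/- arXiv:0911.0469 — 2 statements merged into one kernel-verified Lean document; each statement's English description precedes it below -/
import Mathlib

section
/- If A ↪ B is a monomorphism of simplicial sets and X → Y is an inner fibration, then the induced map X^B → X^A ×_{Y^A} Y^B is an inner fibration. In particular, if X is a quasi-category then so is the internal mapping object X^A for any simplicial set A. -/
open CategoryTheory Simplicial Opposite Limits MonoidalCategory

namespace Paper

/-- The 0-coskeleton `E S` of a set `S`: the simplicial set with
`(E S)_n = S^{n+1}`, i.e. the nerve of the groupoid with object set `S`
and exactly one morphism between each ordered pair of objects. -/
def E (S : Type) : SSet where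
  obj m := Fin (m.unop.len + 1) → S
  map f := TypeCat.ofHom fun α => α ∘ f.unop.toOrderHom

/-- The constant map `X ⟶ E S` at a point `s : S`.  For `X = Δ[0]` this is
the inclusion of the vertex `s` into `E S`. -/
def constE (X : SSet) {S : Type} (s : S) : X ⟶ E S where
  app m := TypeCat.ofHom fun _ => fun _ => s

/-- The constant map `X ⟶ Δ[n]` at the vertex `i`.  For `n = 0` this is the
canonical map `X ⟶ Δ[0]` to the terminal simplicial set. -/
def constSimplex (X : SSet) (n : ℕ) (i : Fin (n + 1)) : X ⟶ Δ[n] where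
  app m := TypeCat.ofHom fun _ => SSet.stdSimplex.objEquiv.symm (SimplexCategory.const m.unop ⦋n⦌ i)
  naturality _ _ _ := rfl

/-- The edge inclusion `Δ[1] ⟶ E (Fin 2)`, i.e. the nondegenerate
1-simplex of `E¹` from the vertex `0` to the vertex `1`. -/
def edgeE : Δ[1] ⟶ E (Fin 2) where
  app m := TypeCat.ofHom fun α => fun i => SSet.stdSimplex.asOrderHom α i

/-- A map of simplicial sets is an inner fibration if it has the right lifting
property with respect to all inner horn inclusions `Λ[n, i] ⟶ Δ[n]`, `0 < i < n`. -/
def InnerFibration {X Y : SSet} (p : X ⟶ Y) : Prop :=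
  ∀ (n : ℕ) (i : Fin (n + 1)), 0 < i → i < Fin.last n →
    HasLiftingProperty (Λ[n, i].ι) p

/-- A 1-simplex `f` of a simplicial set `X`, with `d₁ f = a` and `d₀ f = b`,
is a quasi-isomorphism if there are a 1-simplex `g` with `d₁ g = b`, `d₀ g = a`
and 2-simplices `σ`, `τ` with `d₂ σ = f`, `d₀ σ = g`, `d₁ σ = s₀ a` and
`d₂ τ = g`, `d₀ τ = f`, `d₁ τ = s₀ b`. -/
def IsQuasiIso {X : SSet} (f : X _⦋1⦌) : Prop :=
  ∃ (g : X _⦋1⦌) (σ τ : X _⦋2⦌),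
    X.δ 1 g = X.δ 0 f ∧ X.δ 0 g = X.δ 1 f ∧
    X.δ 2 σ = f ∧ X.δ 0 σ = g ∧ X.δ 1 σ = X.σ 0 (X.δ 1 f) ∧
    X.δ 2 τ = g ∧ X.δ 0 τ = f ∧ X.δ 1 τ = X.σ 0 (X.δ 0 f)

/-- The pushout-product `f □ g : (A × D) ∪_{A × C} (B × C) ⟶ B × D`
of two maps `f : A ⟶ B` and `g : C ⟶ D` of simplicial sets. -/
noncomputable def pushoutProd {A B C D : SSet.{u_1}} (f : A ⟶ B) (g : C ⟶ D) :
    pushout (f ▷ C) (A ◁ g) ⟶ B ⊗ D :=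
  pushout.desc (B ◁ g) (f ▷ D) (whisker_exchange f g).symm

/-- The inclusion `A ⟶ A × E¹` at the vertex `s` of `E¹ = E (Fin 2)`. -/
noncomputable def incE1 (A : SSet) (s : Fin 2) : A ⟶ A ⊗ E (Fin 2) :=
  CartesianMonoidalCategory.lift (𝟙 A) (constE A s)

/-- Two maps `f g : A ⟶ Z` are `E¹`-homotopic if there is a homotopy
`H : A × E¹ ⟶ Z` restricting to `f` on `A × {0}` and to `g` on `A × {1}`. -/
def E1Homotopic {A Z : SSet} (f g : A ⟶ Z) : Prop :=
  ∃ H : A ⊗ E (Fin 2) ⟶ Z, incE1 A 0 ≫ H = f ∧ incE1 A 1 ≫ H = g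

/-- The set `[A, Z]_{E¹}` of `E¹`-homotopy classes of maps `A ⟶ Z`. -/
def E1Classes (A Z : SSet) : Type :=
  Quot (@E1Homotopic A Z)

lemma incE1_whiskerRight {A B : SSet} (f : A ⟶ B) (s : Fin 2) :
    incE1 A s ≫ (f ▷ E (Fin 2)) = f ≫ incE1 B s := rfl

/-- Precomposition `[B, Z]_{E¹} → [A, Z]_{E¹}` with a map `f : A ⟶ B`. -/
noncomputable def E1Precomp {A B : SSet} (f : A ⟶ B) (Z : SSet) :
    E1Classes B Z → E1Classes A Z :=
  Quot.map (fun g => f ≫ g) (by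
    rintro g g' ⟨H, h0, h1⟩
    refine ⟨(f ▷ E (Fin 2)) ≫ H, ?_, ?_⟩
    · rw [← Category.assoc, incE1_whiskerRight, Category.assoc, h0]
    · rw [← Category.assoc, incE1_whiskerRight, Category.assoc, h1])

/-- A map of simplicial sets `f : A ⟶ B` is a Joyal equivalence if
`[B, Z]_{E¹} → [A, Z]_{E¹}` is a bijection for every quasicategory `Z`. -/
def JoyalEquiv {A B : SSet} (f : A ⟶ B) : Prop :=
  ∀ (Z : SSet), SSet.Quasicategory Z → Function.Bijective (E1Precomp f Z)

end Paper

noncomputable instance : MonoidalClosed SSet.{0} :=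
  (inferInstance : MonoidalClosed (SimplexCategoryᵒᵖ ⥤ Type 0))

namespace Paper

/-- The matching map `X^B ⟶ X^A ×_{Y^A} Y^B` induced by `i : A ⟶ B` and `p : X ⟶ Y`,
where `X^A = (ihom A).obj X` is the internal mapping object. -/
noncomputable def matchingMap {A B X Y : SSet.{0}} (i : A ⟶ B) (p : X ⟶ Y) :
    (ihom B).obj X ⟶ pullback ((ihom A).map p) ((MonoidalClosed.pre i).app Y) :=
  pullback.lift ((MonoidalClosed.pre i).app X) ((ihom B).map p)
    ((MonoidalClosed.pre i).naturality p).symm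



universe u

/-! ### Auxiliary machinery: partial lifts on simplicial subsets -/

section PartialLift

open SimplexCategory

variable {W X Y : SSet} (p : X ⟶ Y) (v : W ⟶ Y)

/-- A partial lift of `v : W ⟶ Y` through `p : X ⟶ Y`, defined on a
simplicial subset of `W`. -/
structure PLift' where
  S : ∀ j : SimplexCategoryᵒᵖ, Set (W.obj j)
  hS : ∀ {j j' : SimplexCategoryᵒᵖ} (ψ : j ⟶ j') (x : W.obj j), x ∈ S j → W.map ψ x ∈ S j'
  g : ∀ (j : SimplexCategoryᵒᵖ) (x : W.obj j), x ∈ S j → X.obj j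
  hnat : ∀ {j j' : SimplexCategoryᵒᵖ} (ψ : j ⟶ j') (x : W.obj j) (hx : x ∈ S j),
    g j' (W.map ψ x) (hS ψ x hx) = X.map ψ (g j x hx)
  hcomp : ∀ (j : SimplexCategoryᵒᵖ) (x : W.obj j) (hx : x ∈ S j),
    p.app j (g j x hx) = v.app j x

namespace PLift'

variable {p v}

lemma g_congr (P : PLift' p v) {j : SimplexCategoryᵒᵖ} {x x' : W.obj j} (h : x = x')
    (hx : x ∈ P.S j) (hx' : x' ∈ P.S j) : P.g j x hx = P.g j x' hx' := by
  subst h; rfl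

lemma hnat' (P : PLift' p v) {j j' : SimplexCategoryᵒᵖ} (ψ : j ⟶ j') (x : W.obj j)
    (hx : x ∈ P.S j) {y : W.obj j'} (hy : y ∈ P.S j') (h : y = W.map ψ x) :
    P.g j' y hy = X.map ψ (P.g j x hx) :=
  (P.g_congr h hy (P.hS ψ x hx)).trans (P.hnat ψ x hx)

/-- Extension order on partial lifts. -/
protected def LE (P Q : PLift' p v) : Prop :=
  (∀ j, P.S j ⊆ Q.S j) ∧ ∀ j (x : W.obj j) (hx : x ∈ P.S j) (hx' : x ∈ Q.S j),
    Q.g j x hx' = P.g j x hx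

instance : Preorder (PLift' p v) where
  le := PLift'.LE
  le_refl P := ⟨fun _ => le_refl _, fun _ _ _ _ => rfl⟩
  le_trans P Q R h h' := ⟨fun j => (h.1 j).trans (h'.1 j),
    fun j x hx hx' => ((h'.2 j x (h.1 j hx) hx').trans (h.2 j x hx _))⟩

lemma le_def {P Q : PLift' p v} : P ≤ Q ↔ PLift'.LE P Q := Iff.rfl

/-- Transport a partial lift along a pointwise description of its domain. -/
def copy (P : PLift' p v) (S' : ∀ j : SimplexCategoryᵒᵖ, Set (W.obj j))
    (hS' : ∀ j, S' j = P.S j) : PLift' p v where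
  S := S'
  hS := fun {j j'} ψ x hx => by rw [hS' j'] ; exact P.hS ψ x (by rwa [hS' j] at hx)
  g := fun j x hx => P.g j x (by rwa [hS' j] at hx)
  hnat := fun {j j'} ψ x hx => P.hnat ψ x _
  hcomp := fun j x hx => P.hcomp j x _

lemma copy_le (P : PLift' p v) (S' : ∀ j, Set (W.obj j)) (hS' : ∀ j, S' j = P.S j) :
    P ≤ P.copy S' hS' :=
  ⟨fun j => (hS' j).superset, fun j x hx hx' => rfl⟩

lemma le_copy (P : PLift' p v) (S' : ∀ j, Set (W.obj j)) (hS' : ∀ j, S' j = P.S j) :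
    P.copy S' hS' ≤ P :=
  ⟨fun j => (hS' j).subset, fun j x hx hx' => rfl⟩

end PLift'

/-- Extending a partial lift along an inner horn filling. -/
lemma PLift'.extend_horn (P : PLift' p v) (hp : InnerFibration p)
    (r : ℕ) (ℓ : Fin (r + 1)) (h0 : 0 < ℓ) (hr : ℓ < Fin.last r)
    (τ : W.obj (op ⦋r⦌))
    (H3 : ∀ {j : SimplexCategory} (φ φ' : j ⟶ ⦋r⦌),
      W.map φ.op τ = W.map φ'.op τ → φ = φ')
    (H1 : ∀ {j : SimplexCategory} (φ : j ⟶ ⦋r⦌),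
      Set.range φ.toOrderHom ∪ {ℓ} ≠ Set.univ → W.map φ.op τ ∈ P.S (op j))
    (H2 : ∀ {j : SimplexCategory} (φ : j ⟶ ⦋r⦌),
      Set.range φ.toOrderHom ∪ {ℓ} = Set.univ → W.map φ.op τ ∉ P.S (op j)) :
    ∃ Q : PLift' p v, P ≤ Q ∧
      ∀ j (x : W.obj j), x ∈ Q.S j ↔
        (x ∈ P.S j ∨ ∃ φ : j.unop ⟶ ⦋r⦌, x = W.map φ.op τ) := by
  classical
  have Wmap_comp : ∀ {j j' : SimplexCategoryᵒᵖ} (ψ : j ⟶ j') (φ : j.unop ⟶ ⦋r⦌),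
      W.map ψ (W.map φ.op τ) = W.map (ψ.unop ≫ φ).op τ := by
    intro j j' ψ φ
    rw [← FunctorToTypes.map_comp_apply]
    rfl
  let oE : ∀ (j : SimplexCategoryᵒᵖ), (Δ[r].obj j) ≃ (j.unop ⟶ ⦋r⦌) :=
    fun j => SSet.stdSimplex.objEquiv (n := ⦋r⦌) (m := j)
  let aΛ : (Λ[r, ℓ] : SSet) ⟶ X :=
    { app := fun j => TypeCat.ofHom fun α => P.g j (W.map ((oE j) α.1).op τ) (H1 _ α.2)
      naturality := by
        intro j j' ψ
        ext α
        exact P.hnat' ψ _ (H1 _ α.2) (H1 _ (((Λ[r,ℓ] : SSet).map ψ α).2))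
          (Wmap_comp ψ ((oE j) α.1)).symm }
  let bΔ : Δ[r] ⟶ Y :=
    { app := fun j => TypeCat.ofHom fun f => v.app j (W.map ((oE j) f).op τ)
      naturality := by
        intro j j' ψ
        apply ConcreteCategory.hom_ext
        intro f
        dsimp only [types_comp_apply]
        show v.app j' (W.map ((oE j') (Δ[r].map ψ f)).op τ) = Y.map ψ (v.app j (W.map ((oE j) f).op τ))
        rw [← FunctorToTypes.naturality, Wmap_comp]
        rfl }
  have sq : CommSq aΛ (Λ[r, ℓ].ι) p bΔ := by
    constructor
    ext j α
    exact P.hcomp j _ _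
  have hlp : HasLiftingProperty (Λ[r, ℓ].ι) p := hp r ℓ h0 hr
  obtain ⟨⟨⟨l, hl1, hl2⟩⟩⟩ := hlp.sq_hasLift sq
  -- value of the lift on horn simplices
  have lval : ∀ {j : SimplexCategory} (φ : j ⟶ ⦋r⦌) (hh : W.map φ.op τ ∈ P.S (op j)),
      l.app (op j) ((oE (op j)).symm φ) = P.g (op j) (W.map φ.op τ) hh := by
    intro j φ hh
    have hcond : Set.range φ.toOrderHom ∪ {ℓ} ≠ Set.univ := fun hc => (H2 φ hc) hh
    exact types_congr_hom (NatTrans.congr_app hl1 (op j)) ⟨(oE (op j)).symm φ, hcond⟩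
  have lnat : ∀ {j j' : SimplexCategoryᵒᵖ} (ψ : j ⟶ j') (φ : j.unop ⟶ ⦋r⦌),
      l.app j' ((oE j').symm (ψ.unop ≫ φ)) = X.map ψ (l.app j ((oE j).symm φ)) :=
    fun {j j'} ψ φ => types_congr_hom (l.naturality ψ) ((oE j).symm φ)
  have lcomp : ∀ {j : SimplexCategoryᵒᵖ} (φ : j.unop ⟶ ⦋r⦌),
      p.app j (l.app j ((oE j).symm φ)) = v.app j (W.map φ.op τ) :=
    fun {j} φ => types_congr_hom (NatTrans.congr_app hl2 j) ((oE j).symm φ)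
  -- the new partial lift
  set S' : ∀ j : SimplexCategoryᵒᵖ, Set (W.obj j) :=
    fun j => P.S j ∪ {x | ∃ φ : j.unop ⟶ ⦋r⦌, x = W.map φ.op τ} with hS'def
  have hS' : ∀ {j j' : SimplexCategoryᵒᵖ} (ψ : j ⟶ j') (x : W.obj j),
      x ∈ S' j → W.map ψ x ∈ S' j' := by
    rintro j j' ψ x (hx | ⟨φ, rfl⟩)
    · exact Or.inl (P.hS ψ x hx)
    · exact Or.inr ⟨ψ.unop ≫ φ, Wmap_comp ψ φ⟩
  let gnew : ∀ (j : SimplexCategoryᵒᵖ) (x : W.obj j), x ∈ S' j → X.obj j :=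
    fun j x hx =>
      if h : x ∈ P.S j then P.g j x h
      else l.app j ((oE j).symm (Classical.choose (hx.resolve_left h)))
  have gval_old : ∀ (j) (x : W.obj j) (hx : x ∈ S' j) (h : x ∈ P.S j),
      gnew j x hx = P.g j x h := fun j x hx h => dif_pos h
  have gval_new : ∀ (j) (x : W.obj j) (hx : x ∈ S' j) (h : x ∉ P.S j)
      (φ : j.unop ⟶ ⦋r⦌) (hφ : x = W.map φ.op τ),
      gnew j x hx = l.app j ((oE j).symm φ) := by
    intro j x hx h φ hφ
    have hsp := Classical.choose_spec (hx.resolve_left h)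
    have : Classical.choose (hx.resolve_left h) = φ := H3 _ _ (by rw [← hsp, ← hφ])
    show (if h' : x ∈ P.S j then P.g j x h' else _) = _
    rw [dif_neg h, this]
  refine ⟨{
    S := S'
    hS := hS'
    g := gnew
    hnat := ?_
    hcomp := ?_ }, ⟨fun j x hx => Or.inl hx, fun j x hx hx' => gval_old j x hx' hx⟩,
    fun j x => Iff.rfl⟩
  · intro j j' ψ x hx
    by_cases h : x ∈ P.S j
    · rw [gval_old j x hx h, gval_old j' _ (hS' ψ x hx) (P.hS ψ x h)]
      exact P.hnat ψ x h
    · obtain ⟨φ, hφ⟩ := hx.resolve_left h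
      rw [gval_new j x hx h φ hφ]
      by_cases h' : W.map ψ x ∈ P.S j'
      · rw [gval_old j' _ (hS' ψ x hx) h']
        have h'' : W.map (ψ.unop ≫ φ).op τ ∈ P.S j' := by
          rw [← Wmap_comp, ← hφ]; exact h'
        calc P.g j' (W.map ψ x) h'
            = P.g j' (W.map (ψ.unop ≫ φ).op τ) h'' := P.g_congr (by rw [hφ, Wmap_comp]) _ _
          _ = l.app j' ((oE j').symm (ψ.unop ≫ φ)) := (lval _ _).symm
          _ = X.map ψ (l.app j ((oE j).symm φ)) := lnat ψ φ
      · rw [gval_new j' _ (hS' ψ x hx) h' (ψ.unop ≫ φ) (by rw [hφ, Wmap_comp])]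
        exact lnat ψ φ
  · intro j x hx
    by_cases h : x ∈ P.S j
    · rw [gval_old j x hx h]; exact P.hcomp j x h
    · obtain ⟨φ, hφ⟩ := hx.resolve_left h
      rw [gval_new j x hx h φ hφ, lcomp, ← hφ]

end PartialLift


/-! ### Chain combinatorics in the product of two simplices -/

section ChainComb

open SimplexCategory Finset

variable (m n : ℕ) (k : Fin (n + 1))

/-- The vertex poset of `Δ[m] × Δ[n]`. -/
abbrev PP := Fin (m + 1) × Fin (n + 1)

variable {m n}

/-- A chain covers all first coordinates, and all second coordinates except
possibly `k`. -/
def inCompl (c : Finset (PP m n)) : Prop :=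
  (∀ a : Fin (m + 1), ∃ y ∈ c, y.1 = a) ∧
    (∀ b : Fin (n + 1), b ≠ k → ∃ y ∈ c, y.2 = b)

lemma inCompl_mono {c c' : Finset (PP m n)} (h : c ⊆ c') (hc : inCompl k c) :
    inCompl k c' :=
  ⟨fun a => (hc.1 a).imp (fun y hy => ⟨h hy.1, hy.2⟩),
   fun b hb => ((hc.2 b hb).imp (fun y hy => ⟨h hy.1, hy.2⟩))⟩

/-- `(b, k)` can be inserted in the chain `c`. -/
def insok (c : Finset (PP m n)) (b : Fin (m + 1)) : Prop :=
  ∀ y ∈ c, (b, k) ≤ y ∨ y ≤ (b, k)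

open Classical in
/-- The set of insertable `b`s. -/
noncomputable def insSet (c : Finset (PP m n)) : Finset (Fin (m + 1)) :=
  Finset.univ.filter (fun b => insok k c b)

open Classical in
lemma mem_insSet {c : Finset (PP m n)} {b : Fin (m + 1)} :
    b ∈ insSet k c ↔ insok k c b := by
  simp [insSet]

lemma insSet_nonempty {c : Finset (PP m n)} (hc : IsChain (· ≤ ·) (↑c : Set (PP m n))) :
    (insSet k c).Nonempty := by
  classical
  by_cases hU : (c.filter (fun y => y.2 ≤ k)).Nonempty
  · obtain ⟨y', hy', hy'max⟩ := Finset.exists_max_image _ toLex hU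
    rw [Finset.mem_filter] at hy'
    refine ⟨y'.1, mem_insSet k |>.2 (fun y hy => ?_)⟩
    by_cases h2 : y.2 ≤ k
    · refine Or.inr ?_
      have := hy'max y (Finset.mem_filter.2 ⟨hy, h2⟩)
      have hle : y ≤ y' := by
        rcases eq_or_ne y y' with rfl | hne
        · exact le_refl _
        · rcases hc hy hy'.1 hne with h | h
          · exact h
          · have := Prod.Lex.toLex_mono h
            have heq : toLex y = toLex y' := le_antisymm ‹toLex y ≤ toLex y'› this
            exact le_of_eq (toLex.injective heq)
      exact ⟨hle.1, h2⟩
    · push_neg at h2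
      refine Or.inl ?_
      have hne : y' ≠ y := fun h => by rw [h] at hy'; exact absurd hy'.2 (not_le.2 h2)
      rcases hc hy'.1 hy hne with h | h
      · exact ⟨h.1, le_of_lt h2⟩
      · exact absurd (le_trans h.2 hy'.2) (not_le.2 h2)
  · refine ⟨0, mem_insSet k |>.2 (fun y hy => ?_)⟩
    rw [Finset.not_nonempty_iff_eq_empty, Finset.filter_eq_empty_iff] at hU
    exact Or.inl ⟨Fin.zero_le _, le_of_not_ge (hU hy)⟩

open Classical in
/-- The minimal insertable value. -/
noncomputable def βc (c : Finset (PP m n)) : Fin (m + 1) :=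
  if h : (insSet k c).Nonempty then (insSet k c).min' h else 0

lemma βc_insok {c : Finset (PP m n)} (hc : IsChain (· ≤ ·) (↑c : Set (PP m n))) :
    insok k c (βc k c) := by
  classical
  have h := insSet_nonempty k hc
  rw [βc, dif_pos h]
  exact (mem_insSet k).1 ((insSet k c).min'_mem h)

lemma βc_min {c : Finset (PP m n)} (hc : IsChain (· ≤ ·) (↑c : Set (PP m n)))
    {b : Fin (m + 1)} (hb : insok k c b) : βc k c ≤ b := by
  classical
  have h := insSet_nonempty k hc
  rw [βc, dif_pos h]
  exact Finset.min'_le _ _ ((mem_insSet k).2 hb)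

lemma insok_of_subset {c c' : Finset (PP m n)} (h : c' ⊆ c) {b : Fin (m + 1)}
    (hb : insok k c b) : insok k c' b := fun y hy => hb y (h hy)

lemma insok_of_mem {c : Finset (PP m n)} (hc : IsChain (· ≤ ·) (↑c : Set (PP m n)))
    {b : Fin (m + 1)} (hb : (b, k) ∈ c) : insok k c b := by
  intro y hy
  rcases eq_or_ne y (b, k) with rfl | hne
  · exact Or.inl (le_refl _)
  · rcases hc hb hy hne.symm with h | h
    · exact Or.inl h
    · exact Or.inr h

lemma βc_le_of_subset {c c' : Finset (PP m n)} (hc : IsChain (· ≤ ·) (↑c : Set (PP m n)))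
    (hc' : IsChain (· ≤ ·) (↑c' : Set (PP m n))) (h : c' ⊆ c) : βc k c' ≤ βc k c :=
  βc_min k hc' (insok_of_subset k h (βc_insok k hc))

/-- `c` is an upper chain (contains its insertion vertex). -/
def isUp (c : Finset (PP m n)) : Prop := (βc k c, k) ∈ c

/-- In a chain in the complement, there is an element strictly below
`(βc, k)` whenever `(βc, k)` is in the chain.  Uses `0 < k`. -/
lemma exists_lt_βc {c : Finset (PP m n)} (hc : IsChain (· ≤ ·) (↑c : Set (PP m n)))
    (hcc : inCompl k c) (hk0 : (0 : Fin (n + 1)) < k) (hup : isUp k c) :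
    ∃ z ∈ c, z < (βc k c, k) := by
  by_contra h
  push_neg at h
  -- every element is ≥ (βc, k)
  have hge : ∀ z ∈ c, (βc k c, k) ≤ z := by
    intro z hz
    rcases eq_or_ne z (βc k c, k) with rfl | hne
    · exact le_refl _
    · rcases hc hup hz hne.symm with h' | h'
      · exact h'
      · exact absurd (lt_of_le_of_ne h' hne) (h z hz)
  obtain ⟨y, hy, hy2⟩ := hcc.2 0 (fun h0 => absurd h0.symm (ne_of_gt hk0))
  have := (hge y hy).2
  rw [hy2] at this
  exact absurd (le_antisymm this (Fin.zero_le k)) (ne_of_gt hk0)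

/-- There is an element strictly above `(βc, k)`.  Uses `k < Fin.last n`. -/
lemma exists_gt_βc {c : Finset (PP m n)} (hc : IsChain (· ≤ ·) (↑c : Set (PP m n)))
    (hcc : inCompl k c) (hkn : k < Fin.last n) (hup : isUp k c) :
    ∃ z ∈ c, (βc k c, k) < z := by
  by_contra h
  push_neg at h
  have hle : ∀ z ∈ c, z ≤ (βc k c, k) := by
    intro z hz
    rcases eq_or_ne z (βc k c, k) with rfl | hne
    · exact le_refl _
    · rcases hc hup hz hne.symm with h' | h'
      · exact absurd (lt_of_le_of_ne h' hne.symm) (h z hz)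
      · exact h'
  obtain ⟨y, hy, hy2⟩ := hcc.2 (Fin.last n) (ne_of_gt hkn)
  have := (hle y hy).2
  rw [hy2] at this
  exact absurd (le_antisymm this (le_of_lt hkn)) (ne_of_gt hkn)

/-- The "no bad case" lemma: removing the insertion vertex of an upper
complement chain stays in the complement. -/
lemma inCompl_erase_βc {c : Finset (PP m n)} (hc : IsChain (· ≤ ·) (↑c : Set (PP m n)))
    (hcc : inCompl k c) (hk0 : (0 : Fin (n + 1)) < k) (hup : isUp k c) :
    inCompl k (c.erase (βc k c, k)) := by
  classical
  constructor
  · intro a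
    rcases eq_or_ne a (βc k c) with rfl | hne
    · -- need another element with first coordinate βc
      by_contra hcon
      push_neg at hcon
      obtain ⟨z₀, hz₀, hz₀lt⟩ := exists_lt_βc k hc hcc hk0 hup
      have hU : (c.filter (fun y => y < (βc k c, k))).Nonempty :=
        ⟨z₀, Finset.mem_filter.2 ⟨hz₀, hz₀lt⟩⟩
      obtain ⟨y', hy', hy'max⟩ := Finset.exists_max_image _ toLex hU
      rw [Finset.mem_filter] at hy'
      have hinsok : insok k c y'.1 := by
        intro z hz
        rcases eq_or_ne z (βc k c, k) with rfl | hnz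
        · exact Or.inl ⟨hy'.2.le.1, le_refl _⟩
        · rcases hc hup hz hnz.symm with h' | h'
          · exact Or.inl (le_trans ⟨hy'.2.le.1, le_refl _⟩ h')
          · -- z ≤ (βc, k), z ≠ it, so z < it, so z ∈ U, so z ≤ y'
            have hzU : z ∈ c.filter (fun y => y < (βc k c, k)) :=
              Finset.mem_filter.2 ⟨hz, lt_of_le_of_ne h' hnz⟩
            have hlex := hy'max z hzU
            have hle : z ≤ y' := by
              rcases eq_or_ne z y' with rfl | hne'
              · exact le_refl _
              · rcases hc hz hy'.1 hne' with h'' | h''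
                · exact h''
                · have := Prod.Lex.toLex_mono h''
                  exact le_of_eq (toLex.injective (le_antisymm hlex this))
            exact Or.inr ⟨hle.1, le_trans hle.2 hy'.2.le.2⟩
      have h1 := βc_min k hc hinsok
      have h2 : y'.1 ≠ βc k c :=
        hcon y' (Finset.mem_erase.2 ⟨ne_of_lt hy'.2, hy'.1⟩)
      have h3 : y'.1 ≤ βc k c := hy'.2.le.1
      exact h2 (le_antisymm h3 h1)
    · obtain ⟨y, hy, hy1⟩ := hcc.1 a
      refine ⟨y, Finset.mem_erase.2 ⟨fun he => ?_, hy⟩, hy1⟩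
      rw [he] at hy1
      exact hne hy1.symm
  · intro b hb
    obtain ⟨y, hy, hy2⟩ := hcc.2 b hb
    refine ⟨y, Finset.mem_erase.2 ⟨fun he => hb ?_, hy⟩, hy2⟩
    rw [he] at hy2
    exact hy2.symm

end ChainComb


section ChainComb2

open SimplexCategory Finset

variable {m n : ℕ} (k : Fin (n + 1))

lemma βc_insert {c : Finset (PP m n)} (hc : IsChain (· ≤ ·) (↑c : Set (PP m n)))
    (hlo : ¬ isUp k c) : βc k (insert (βc k c, k) c) = βc k c := by
  classical
  have hchain : IsChain (· ≤ ·) (↑(insert (βc k c, k) c) : Set (PP m n)) := by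
    intro x hx y hy hxy
    simp only [Finset.coe_insert, Set.mem_insert_iff, Finset.mem_coe] at hx hy
    rcases hx with rfl | hx
    · rcases hy with rfl | hy
      · exact absurd rfl hxy
      · exact (βc_insok k hc y hy).imp id id
    · rcases hy with rfl | hy
      · exact ((βc_insok k hc x hx).symm).imp id id
      · exact hc hx hy hxy
  apply le_antisymm
  · apply βc_min k hchain
    intro y hy
    rcases Finset.mem_insert.1 hy with rfl | hy
    · exact Or.inl (le_refl _)
    · exact βc_insok k hc y hy
  · exact βc_le_of_subset k hchain hc (Finset.subset_insert _ _)

lemma chain_insert_βc {c : Finset (PP m n)} (hc : IsChain (· ≤ ·) (↑c : Set (PP m n))) :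
    IsChain (· ≤ ·) (↑(insert (βc k c, k) c) : Set (PP m n)) := by
  intro x hx y hy hxy
  simp only [Finset.coe_insert, Set.mem_insert_iff, Finset.mem_coe] at hx hy
  rcases hx with rfl | hx
  · rcases hy with rfl | hy
    · exact absurd rfl hxy
    · exact (βc_insok k hc y hy).imp id id
  · rcases hy with rfl | hy
    · exact ((βc_insok k hc x hx).symm).imp id id
    · exact hc hx hy hxy

lemma βc_erase {c : Finset (PP m n)} (hc : IsChain (· ≤ ·) (↑c : Set (PP m n)))
    (hup : isUp k c) : βc k (c.erase (βc k c, k)) = βc k c := by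
  classical
  have hchain : IsChain (· ≤ ·) (↑(c.erase (βc k c, k)) : Set (PP m n)) :=
    hc.mono (by simp [Finset.erase_subset])
  apply le_antisymm
  · exact βc_le_of_subset k hc hchain (Finset.erase_subset _ _)
  · by_contra hlt
    push_neg at hlt
    have hins : insok k c (βc k (c.erase (βc k c, k))) := by
      intro y hy
      rcases eq_or_ne y (βc k c, k) with rfl | hne
      · exact Or.inl ⟨hlt.le, le_refl _⟩
      · exact βc_insok k hchain y (Finset.mem_erase.2 ⟨hne, hy⟩)
    exact absurd (βc_min k hc hins) (not_le.2 hlt)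

/-- The upper chain associated to a complement chain. -/
noncomputable def handler (c : Finset (PP m n)) : Finset (PP m n) := by
  classical
  exact if isUp k c then c else insert (βc k c, k) c

/-- The rank of a complement chain, used for the filling order. -/
noncomputable def rank (c : Finset (PP m n)) : ℕ :=
  (handler k c).card * (m + 2) + (βc k c).val

lemma handler_up {c : Finset (PP m n)} (h : isUp k c) : handler k c = c := by
  classical
  simp [handler, h]

lemma handler_low {c : Finset (PP m n)} (h : ¬ isUp k c) :
    handler k c = insert (βc k c, k) c := by
  classical
  simp [handler, h]

/-- The handler is an upper complement chain and `c` is either the handler or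
its lower partner. -/
lemma handler_spec {c : Finset (PP m n)} (hc : IsChain (· ≤ ·) (↑c : Set (PP m n)))
    (hcc : inCompl k c) :
    IsChain (· ≤ ·) (↑(handler k c) : Set (PP m n)) ∧ inCompl k (handler k c) ∧
      isUp k (handler k c) ∧
      (c = handler k c ∨ c = (handler k c).erase (βc k (handler k c), k)) ∧
      βc k (handler k c) = βc k c := by
  classical
  by_cases h : isUp k c
  · rw [handler_up k h]
    exact ⟨hc, hcc, h, Or.inl rfl, rfl⟩
  · rw [handler_low k h]
    have hchain := chain_insert_βc k hc
    have hβ := βc_insert k hc h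
    refine ⟨hchain, inCompl_mono k (Finset.subset_insert _ _) hcc, ?_, Or.inr ?_, hβ⟩
    · rw [isUp, hβ]
      exact Finset.mem_insert_self _ _
    · rw [hβ, Finset.erase_insert (by rwa [isUp] at h)]

lemma rank_partner {e : Finset (PP m n)} (hc : IsChain (· ≤ ·) (↑e : Set (PP m n)))
    (hup : isUp k e) : rank k (e.erase (βc k e, k)) = rank k e := by
  classical
  have hβ := βc_erase k hc hup
  have hlow : ¬ isUp k (e.erase (βc k e, k)) := by
    rw [isUp, hβ]
    simp
  rw [rank, rank, handler_low k hlow, hβ, Finset.insert_erase hup, handler_up k hup]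

lemma card_handler_le {c : Finset (PP m n)} : (handler k c).card ≤ c.card + 1 := by
  classical
  by_cases h : isUp k c
  · rw [handler_up k h]; omega
  · rw [handler_low k h]
    exact Finset.card_insert_le _ _

/-- Rank decreases when passing to a face (except for the lower partner of an
upper chain). -/
lemma rank_erase_lt {c : Finset (PP m n)} (hc : IsChain (· ≤ ·) (↑c : Set (PP m n)))
    {v : PP m n} (hv : v ∈ c)
    (hnp : ¬ (isUp k c ∧ v = (βc k c, k))) :
    rank k (c.erase v) < rank k c := by
  classical
  have hchain : IsChain (· ≤ ·) (↑(c.erase v) : Set (PP m n)) :=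
    hc.mono (by simp [Finset.erase_subset])
  have hβle : βc k (c.erase v) ≤ βc k c := βc_le_of_subset k hc hchain (Finset.erase_subset _ _)
  have hcard : (c.erase v).card = c.card - 1 := Finset.card_erase_of_mem hv
  have hcpos : 1 ≤ c.card := Finset.card_pos.2 ⟨v, hv⟩
  have hβbound : (βc k (c.erase v)).val < m + 2 := by
    have := (βc k (c.erase v)).isLt
    omega
  have hA : (c.card - 1) * (m + 2) + (m + 2) = c.card * (m + 2) := by
    have h1 : (c.card - 1) + 1 = c.card := by omega
    calc (c.card - 1) * (m + 2) + (m + 2) = ((c.card - 1) + 1) * (m + 2) := by ring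
      _ = c.card * (m + 2) := by rw [h1]
  by_cases hup : isUp k c
  · have hvne : v ≠ (βc k c, k) := fun h => hnp ⟨hup, h⟩
    have hmem : (βc k c, k) ∈ c.erase v :=
      Finset.mem_erase.2 ⟨fun h => hvne h.symm, hup⟩
    rcases eq_or_lt_of_le hβle with heq | hlt
    · -- erase is upper
      have hup' : isUp k (c.erase v) := by rw [isUp, heq]; exact hmem
      rw [rank, rank, handler_up k hup', handler_up k hup, hcard]
      calc (c.card - 1) * (m + 2) + (βc k (c.erase v)).val
          < (c.card - 1) * (m + 2) + (m + 2) := Nat.add_lt_add_left hβbound _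
        _ = c.card * (m + 2) := hA
        _ ≤ c.card * (m + 2) + (βc k c).val := Nat.le_add_right _ _
    · -- erase is lower with smaller β
      have hnup' : ¬ isUp k (c.erase v) := by
        intro hup'
        have : insok k c (βc k (c.erase v)) := by
          intro y hy
          have hmemc : (βc k (c.erase v), k) ∈ c := Finset.mem_of_mem_erase hup'
          exact insok_of_mem k hc hmemc y hy
        exact absurd (βc_min k hc this) (not_le.2 hlt)
      rw [rank, rank, handler_low k hnup', handler_up k hup]
      have hβnotin : (βc k (c.erase v), k) ∉ c.erase v := by rwa [isUp] at hnup'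
      rw [Finset.card_insert_of_notMem hβnotin, hcard]
      have h1 : (c.card - 1) + 1 = c.card := by omega
      rw [h1]
      exact Nat.add_lt_add_left hlt _
  · -- c is lower : handler has card c.card + 1
    rw [rank, rank, handler_low k hup]
    rw [Finset.card_insert_of_notMem (by rwa [isUp] at hup)]
    have h1 : (handler k (c.erase v)).card ≤ c.card := by
      have := card_handler_le k (c := c.erase v)
      omega
    calc (handler k (c.erase v)).card * (m + 2) + (βc k (c.erase v)).val
        ≤ c.card * (m + 2) + (βc k (c.erase v)).val :=
          Nat.add_le_add_right (Nat.mul_le_mul_right _ h1) _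
      _ < c.card * (m + 2) + (m + 2) := Nat.add_lt_add_left hβbound _
      _ = (c.card + 1) * (m + 2) := by ring
      _ ≤ (c.card + 1) * (m + 2) + (βc k c).val := Nat.le_add_right _ _

/-- Upper complement chains. -/
def IsUC (e : Finset (PP m n)) : Prop :=
  IsChain (· ≤ ·) (↑e : Set (PP m n)) ∧ inCompl k e ∧ isUp k e

open Classical in
/-- The finite set of upper complement chains. -/
noncomputable def Ups : Finset (Finset (PP m n)) :=
  Finset.univ.filter (fun e => IsUC k e)

open Classical in
lemma mem_Ups {e : Finset (PP m n)} : e ∈ Ups (m := m) k ↔ IsUC k e := by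
  simp [Ups]

/-- A chain is "done" relative to a set `G` of processed upper chains. -/
def doneC (G : Finset (Finset (PP m n))) (c : Finset (PP m n)) : Prop :=
  ¬ inCompl k c ∨ ∃ e ∈ G, c = e ∨ c = e.erase (βc k e, k)

/-- `G` is a lower set of upper chains with respect to rank. -/
def LSet (G : Finset (Finset (PP m n))) : Prop :=
  (∀ e ∈ G, IsUC k e) ∧
    ∀ e ∈ G, ∀ e', IsUC k e' → rank k e' < rank k e → e' ∈ G

lemma rank_handler {c : Finset (PP m n)} (hc : IsChain (· ≤ ·) (↑c : Set (PP m n))) :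
    rank k (handler k c) = rank k c := by
  classical
  by_cases h : isUp k c
  · rw [handler_up k h]
  · have hβ := βc_insert k hc h
    have hup' : isUp k (insert (βc k c, k) c) := by
      rw [isUp, hβ]
      exact Finset.mem_insert_self _ _
    rw [rank, rank, handler_low k h, handler_up k hup', hβ]

lemma done_handler_mem {G : Finset (Finset (PP m n))} (hG : LSet k G)
    {c : Finset (PP m n)} (hd : doneC k G c) (hcc : inCompl k c) :
    handler k c ∈ G ∧ rank k c = rank k (handler k c) := by
  obtain ⟨e, heG, hce⟩ := hd.resolve_left (not_not_intro hcc)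
  have he := (hG.1 e heG)
  rcases hce with rfl | rfl
  · rw [handler_up k he.2.2]
    exact ⟨heG, rfl⟩
  · have hβ := βc_erase k he.1 he.2.2
    have hlow : ¬ isUp k (e.erase (βc k e, k)) := by
      rw [isUp, hβ]; simp
    rw [handler_low k hlow, hβ, Finset.insert_erase he.2.2]
    exact ⟨heG, rank_partner k he.1 he.2.2⟩

lemma doneC_of_handler_mem {G : Finset (Finset (PP m n))}
    {c : Finset (PP m n)} (hc : IsChain (· ≤ ·) (↑c : Set (PP m n)))
    (hcc : inCompl k c) (h : handler k c ∈ G) : doneC k G c := by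
  obtain ⟨_, _, _, hch, hβ⟩ := handler_spec k hc hcc
  exact Or.inr ⟨handler k c, h, hch⟩

lemma done_erase {G : Finset (Finset (PP m n))} (hG : LSet k G)
    {c : Finset (PP m n)} (hc : IsChain (· ≤ ·) (↑c : Set (PP m n)))
    (hd : doneC k G c) {v : PP m n} (hv : v ∈ c) : doneC k G (c.erase v) := by
  classical
  by_cases hcc' : inCompl k (c.erase v)
  · have hcc : inCompl k c := inCompl_mono k (Finset.erase_subset _ _) hcc'
    obtain ⟨hmem, hrank⟩ := done_handler_mem k hG hd hcc
    by_cases hsp : isUp k c ∧ v = (βc k c, k)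
    · rw [handler_up k hsp.1] at hmem
      exact Or.inr ⟨c, hmem, Or.inr (by rw [hsp.2])⟩
    · have hlt : rank k (c.erase v) < rank k c := rank_erase_lt k hc hv hsp
      have hchain' : IsChain (· ≤ ·) (↑(c.erase v) : Set (PP m n)) :=
        hc.mono (by simp [Finset.erase_subset])
      obtain ⟨h1, h2, h3, _, _⟩ := handler_spec k hchain' hcc'
      have hmem' : handler k (c.erase v) ∈ G := by
        apply hG.2 (handler k c) hmem
        · exact ⟨h1, h2, h3⟩
        · rw [rank_handler k hchain']
          omega
      exact doneC_of_handler_mem k hchain' hcc' hmem'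
  · exact Or.inl hcc'

lemma done_subset {G : Finset (Finset (PP m n))} (hG : LSet k G) :
    ∀ (N : ℕ) (c : Finset (PP m n)), c.card ≤ N →
      IsChain (· ≤ ·) (↑c : Set (PP m n)) → doneC k G c →
      ∀ c' ⊆ c, doneC k G c' := by
  intro N
  induction N with
  | zero =>
    intro c hcard hc hd c' hc'
    have : c = ∅ := Finset.card_eq_zero.1 (Nat.le_zero.1 hcard)
    subst this
    rwa [Finset.subset_empty.1 hc']
  | succ N ih =>
    intro c hcard hc hd c' hc'
    rcases eq_or_ne c' c with rfl | hne
    · exact hd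
    · obtain ⟨v, hvc, hvc'⟩ := Finset.exists_of_ssubset (lt_of_le_of_ne hc' hne)
      have hsub : c' ⊆ c.erase v := fun x hx =>
        Finset.mem_erase.2 ⟨fun h => hvc' (h ▸ hx), hc' hx⟩
      have hchain' : IsChain (· ≤ ·) (↑(c.erase v) : Set (PP m n)) :=
        hc.mono (by simp [Finset.erase_subset])
      refine ih (c.erase v) ?_ hchain' (done_erase k hG hc hd hvc) c' hsub
      rw [Finset.card_erase_of_mem hvc]
      omega

end ChainComb2


/-! ### Simplices of `Δ[m] ⊗ Δ[n]` and chains -/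

section Geom

open SimplexCategory Finset

variable {m n : ℕ}

/-- The vertex map of a simplex of `Δ[m] ⊗ Δ[n]`. -/
def pm {j : SimplexCategoryᵒᵖ} (x : (Δ[m] ⊗ Δ[n]).obj j) :
    Fin (j.unop.len + 1) → PP m n :=
  fun a => (SSet.stdSimplex.asOrderHom x.1 a, SSet.stdSimplex.asOrderHom x.2 a)

lemma pm_monotone {j : SimplexCategoryᵒᵖ} (x : (Δ[m] ⊗ Δ[n]).obj j) :
    Monotone (pm x) :=
  fun a b hab => ⟨(SSet.stdSimplex.asOrderHom x.1).monotone hab, (SSet.stdSimplex.asOrderHom x.2).monotone hab⟩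

lemma pm_map {j j' : SimplexCategoryᵒᵖ} (ψ : j ⟶ j') (x : (Δ[m] ⊗ Δ[n]).obj j) :
    pm ((Δ[m] ⊗ Δ[n]).map ψ x) = pm x ∘ ψ.unop.toOrderHom :=
  rfl

lemma WW_ext {j : SimplexCategoryᵒᵖ} {x y : (Δ[m] ⊗ Δ[n]).obj j} (h : pm x = pm y) :
    x = y := by
  apply Prod.ext
  · apply (SSet.stdSimplex.objEquiv).injective
    apply SimplexCategory.Hom.ext
    apply OrderHom.ext
    funext a
    exact congrArg Prod.fst (congrFun h a)
  · apply (SSet.stdSimplex.objEquiv).injective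
    apply SimplexCategory.Hom.ext
    apply OrderHom.ext
    funext a
    exact congrArg Prod.snd (congrFun h a)

/-- The support of a simplex of `Δ[m] ⊗ Δ[n]`. -/
def supp {j : SimplexCategoryᵒᵖ} (x : (Δ[m] ⊗ Δ[n]).obj j) : Finset (PP m n) :=
  Finset.image (pm x) Finset.univ

lemma mem_supp_iff {j : SimplexCategoryᵒᵖ} {x : (Δ[m] ⊗ Δ[n]).obj j} {y : PP m n} :
    y ∈ supp x ↔ ∃ a, pm x a = y := by
  simp [supp]

lemma supp_chain {j : SimplexCategoryᵒᵖ} (x : (Δ[m] ⊗ Δ[n]).obj j) :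
    IsChain (· ≤ ·) (↑(supp x) : Set (PP m n)) := by
  intro u hu v hv _
  simp only [supp, Finset.coe_image, Set.mem_image] at hu hv
  obtain ⟨a, -, rfl⟩ := hu
  obtain ⟨b, -, rfl⟩ := hv
  rcases le_total a b with h | h
  · exact Or.inl (pm_monotone x h)
  · exact Or.inr (pm_monotone x h)

lemma supp_map_subset {j j' : SimplexCategoryᵒᵖ} (ψ : j ⟶ j') (x : (Δ[m] ⊗ Δ[n]).obj j) :
    supp ((Δ[m] ⊗ Δ[n]).map ψ x) ⊆ supp x := by
  intro y hy
  rw [mem_supp_iff] at hy ⊢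
  obtain ⟨a, ha⟩ := hy
  exact ⟨ψ.unop.toOrderHom a, ha⟩

section Enum

variable (e : Finset (PP m n)) (r : ℕ) (he : e.card = r + 1)

/-- Enumeration of a chain of `PP` in (lexicographic = product) order. -/
noncomputable def enumC : Fin (r + 1) → PP m n := fun a =>
  ofLex (((e.map (toLex : PP m n ≃ _).toEmbedding).orderIsoOfFin
    (by rw [Finset.card_map, he]) a) : Lex (PP m n))

lemma enumC_mem (a : Fin (r + 1)) : enumC e r he a ∈ e := by
  have := ((e.map (toLex : PP m n ≃ _).toEmbedding).orderIsoOfFin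
    (by rw [Finset.card_map, he]) a).2
  rw [Finset.mem_map] at this
  obtain ⟨y, hy, hyy⟩ := this
  have : enumC e r he a = y := by
    rw [enumC, ← hyy]
    rfl
  rwa [this]

lemma enumC_inj_lex {a b : Fin (r + 1)} (h : enumC e r he a = enumC e r he b) : a = b := by
  apply ((e.map (toLex : PP m n ≃ _).toEmbedding).orderIsoOfFin
    (by rw [Finset.card_map, he])).injective
  apply Subtype.ext
  exact congrArg toLex h

lemma enumC_strictMono (hc : IsChain (· ≤ ·) (↑e : Set (PP m n)))
    {a b : Fin (r + 1)} (hab : a < b) : enumC e r he a < enumC e r he b := by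
  have hlex : (toLex (enumC e r he a) : Lex (PP m n)) < toLex (enumC e r he b) := by
    have := ((e.map (toLex : PP m n ≃ _).toEmbedding).orderIsoOfFin
      (by rw [Finset.card_map, he])).strictMono hab
    exact this
  have hne : enumC e r he a ≠ enumC e r he b := fun h => absurd (congrArg toLex h) (ne_of_lt hlex)
  rcases hc (enumC_mem e r he a) (enumC_mem e r he b) hne with h | h
  · exact lt_of_le_of_ne h hne
  · exact absurd (Prod.Lex.toLex_mono h) (not_le.2 hlex)

lemma enumC_mono (hc : IsChain (· ≤ ·) (↑e : Set (PP m n)))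
    {a b : Fin (r + 1)} (hab : a ≤ b) : enumC e r he a ≤ enumC e r he b := by
  rcases eq_or_lt_of_le hab with rfl | h
  · exact le_refl _
  · exact (enumC_strictMono e r he hc h).le

lemma enumC_surj {y : PP m n} (hy : y ∈ e) : ∃ a, enumC e r he a = y := by
  have hmem : (toLex y : Lex (PP m n)) ∈ e.map (toLex : PP m n ≃ _).toEmbedding :=
    Finset.mem_map_of_mem _ hy
  obtain ⟨a, ha⟩ := ((e.map (toLex : PP m n ≃ _).toEmbedding).orderIsoOfFin
    (by rw [Finset.card_map, he])).surjective ⟨toLex y, hmem⟩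
  refine ⟨a, ?_⟩
  rw [enumC]
  rw [show (((e.map (toLex : PP m n ≃ _).toEmbedding).orderIsoOfFin
    (by rw [Finset.card_map, he]) a) : Lex (PP m n)) = toLex y from congrArg Subtype.val ha]
  rfl

open Classical in
/-- Index of an element of a chain. -/
noncomputable def idxC (y : PP m n) (hy : y ∈ e) : Fin (r + 1) :=
  Classical.choose (enumC_surj e r he hy)

lemma enumC_idxC (y : PP m n) (hy : y ∈ e) : enumC e r he (idxC e r he y hy) = y :=
  Classical.choose_spec (enumC_surj e r he hy)

lemma idxC_mono (hc : IsChain (· ≤ ·) (↑e : Set (PP m n)))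
    {y y' : PP m n} (hy : y ∈ e) (hy' : y' ∈ e) (h : y ≤ y') :
    idxC e r he y hy ≤ idxC e r he y' hy' := by
  by_contra hcon
  push_neg at hcon
  have := enumC_strictMono e r he hc hcon
  rw [enumC_idxC, enumC_idxC] at this
  exact absurd (lt_of_lt_of_le this h) (lt_irrefl _)

/-- The simplex of `Δ[m] ⊗ Δ[n]` associated with a chain with `r + 1` elements. -/
noncomputable def τe (hc : IsChain (· ≤ ·) (↑e : Set (PP m n))) :
    (Δ[m] ⊗ Δ[n]).obj (op ⦋r⦌) :=
  (SSet.stdSimplex.objMk ⟨fun a => (enumC e r he a).1,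
      fun a b hab => (enumC_mono e r he hc hab).1⟩,
   SSet.stdSimplex.objMk ⟨fun a => (enumC e r he a).2,
      fun a b hab => (enumC_mono e r he hc hab).2⟩)

variable (hc : IsChain (· ≤ ·) (↑e : Set (PP m n)))

lemma pm_τe : pm (τe e r he hc) = enumC e r he := by
  funext a
  rfl

lemma pm_map_τe {jj : SimplexCategory} (φ : jj ⟶ ⦋r⦌) :
    pm ((Δ[m] ⊗ Δ[n]).map φ.op (τe e r he hc)) = enumC e r he ∘ φ.toOrderHom := by
  rw [pm_map, pm_τe]
  rfl

lemma supp_map_τe {jj : SimplexCategory} (φ : jj ⟶ ⦋r⦌) :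
    supp ((Δ[m] ⊗ Δ[n]).map φ.op (τe e r he hc)) =
      (Finset.univ.image φ.toOrderHom).image (enumC e r he) := by
  rw [supp, pm_map_τe, ← Finset.image_image]

lemma τe_inj {jj : SimplexCategory} (φ φ' : jj ⟶ ⦋r⦌)
    (h : (Δ[m] ⊗ Δ[n]).map φ.op (τe e r he hc) = (Δ[m] ⊗ Δ[n]).map φ'.op (τe e r he hc)) :
    φ = φ' := by
  have := congrArg pm h
  rw [pm_map_τe, pm_map_τe] at this
  apply SimplexCategory.Hom.ext
  apply OrderHom.ext
  funext a
  exact enumC_inj_lex e r he (congrFun this a)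

/-- Simplices supported in a chain factor through it. -/
lemma exists_factor {j : SimplexCategoryᵒᵖ} (x : (Δ[m] ⊗ Δ[n]).obj j)
    (hs : supp x ⊆ e) : ∃ φ : j.unop ⟶ ⦋r⦌, x = (Δ[m] ⊗ Δ[n]).map φ.op (τe e r he hc) := by
  refine ⟨SimplexCategory.Hom.mk ⟨fun a => idxC e r he (pm x a)
    (hs (mem_supp_iff.2 ⟨a, rfl⟩)), ?_⟩, ?_⟩
  · intro a b hab
    exact idxC_mono e r he hc _ _ (pm_monotone x hab)
  · apply WW_ext
    rw [pm_map_τe]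
    funext a
    exact (enumC_idxC e r he (pm x a) (hs (mem_supp_iff.2 ⟨a, rfl⟩))).symm

end Enum

end Geom


/-! ### The base partial lift -/

section Base

open SimplexCategory

variable {n : ℕ} (k : Fin (n + 1))

/-- Membership in the horn as a predicate on simplices of `Δ[n]`. -/
def hornP {j : SimplexCategoryᵒᵖ} (f : Δ[n].obj j) : Prop :=
  Set.range (SSet.stdSimplex.asOrderHom f) ∪ {k} ≠ Set.univ

lemma hornP_map {j j' : SimplexCategoryᵒᵖ} (ψ : j ⟶ j') {f : Δ[n].obj j}
    (hf : hornP k f) : hornP k (Δ[n].map ψ f) := by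
  intro h
  apply hf
  rw [Set.eq_univ_iff_forall] at h ⊢
  intro b
  rcases h b with hb | hb
  · exact Or.inl (Set.range_comp_subset_range _ _ hb)
  · exact Or.inr hb

variable {A B X Y : SSet} (i : A ⟶ B) (p : X ⟶ Y)
variable (u : B ⊗ Λ[n, k] ⟶ X) (a : A ⊗ Δ[n] ⟶ X) (v : B ⊗ Δ[n] ⟶ Y)

/-- The partial lift defined on `B ⊗ Λ[n,k] ∪ A ⊗ Δ[n]` (main version). -/
lemma basePLift' (hinj : ∀ j, Function.Injective (i.app j))
    (h1 : (i ▷ Λ[n, k]) ≫ u = (A ◁ Λ[n, k].ι) ≫ a)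
    (h2 : u ≫ p = (B ◁ Λ[n, k].ι) ≫ v)
    (h3 : a ≫ p = (i ▷ Δ[n]) ≫ v) :
    ∃ P : PLift' p v,
      (∀ j (w : (B ⊗ Δ[n]).obj j), w ∈ P.S j ↔
        (w.1 ∈ Set.range (i.app j) ∨ hornP k w.2)) ∧
      (∀ j (w : (B ⊗ Δ[n]).obj j) (hf : hornP k w.2) (hw : w ∈ P.S j),
        P.g j w hw = u.app j (w.1, ⟨w.2, hf⟩)) ∧
      (∀ j (α : A.obj j) (f : Δ[n].obj j) (hw : (i.app j α, f) ∈ P.S j),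
        P.g j (i.app j α, f) hw = a.app j (α, f)) := by
  classical
  have hu_eq_a : ∀ (j) (α : A.obj j) (f : Δ[n].obj j) (hf : hornP k f),
      u.app j (i.app j α, ⟨f, hf⟩) = a.app j (α, f) :=
    fun j α f hf => types_congr_hom (NatTrans.congr_app h1 j) (α, ⟨f, hf⟩)
  set S₀ : ∀ j : SimplexCategoryᵒᵖ, Set ((B ⊗ Δ[n]).obj j) :=
    fun j => {w | w.1 ∈ Set.range (i.app j) ∨ hornP k w.2} with hS₀
  have hScl : ∀ {j j' : SimplexCategoryᵒᵖ} (ψ : j ⟶ j') (w : (B ⊗ Δ[n]).obj j),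
      w ∈ S₀ j → (B ⊗ Δ[n]).map ψ w ∈ S₀ j' := by
    rintro j j' ψ w (⟨α, hα⟩ | hf)
    · exact Or.inl ⟨A.map ψ α, (types_congr_hom (i.naturality ψ) α).trans (congrArg (B.map ψ) hα)⟩
    · exact Or.inr (hornP_map k ψ hf)
  let g₀ : ∀ (j : SimplexCategoryᵒᵖ) (w : (B ⊗ Δ[n]).obj j), w ∈ S₀ j → X.obj j :=
    fun j w hw =>
      if hf : hornP k w.2 then u.app j (w.1, ⟨w.2, hf⟩)
      else a.app j (Classical.choose (hw.resolve_right hf), w.2)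
  have g₀_congr : ∀ (j : SimplexCategoryᵒᵖ) (w w' : (B ⊗ Δ[n]).obj j) (h : w = w')
      (hw : w ∈ S₀ j) (hw' : w' ∈ S₀ j), g₀ j w hw = g₀ j w' hw' := by
    intro j w w' h hw hw'
    subst h
    rfl
  have gval_u : ∀ (j) (w : (B ⊗ Δ[n]).obj j) (hf : hornP k w.2) (hw : w ∈ S₀ j),
      g₀ j w hw = u.app j (w.1, ⟨w.2, hf⟩) := fun j w hf hw => dif_pos hf
  have gval_a : ∀ (j) (α : A.obj j) (f : Δ[n].obj j) (hw : (i.app j α, f) ∈ S₀ j),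
      g₀ j (i.app j α, f) hw = a.app j (α, f) := by
    intro j α f hw
    by_cases hf : hornP k f
    · rw [gval_u j _ hf hw]
      exact hu_eq_a j α f hf
    · show (if hf : hornP k f then _ else _) = _
      rw [dif_neg hf]
      have hsp := Classical.choose_spec (hw.resolve_right hf)
      exact congrArg (a.app j) (congrArg (fun z => (z, f)) (hinj j hsp))
  refine ⟨{
    S := S₀
    hS := hScl
    g := g₀
    hnat := ?_
    hcomp := ?_ }, fun j w => Iff.rfl, gval_u, gval_a⟩
  · intro j j' ψ w hw
    by_cases hf : hornP k w.2
    · rw [gval_u j w hf hw, gval_u j' _ (hornP_map k ψ hf) (hScl ψ w hw)]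
      exact types_congr_hom (u.naturality ψ) (w.1, ⟨w.2, hf⟩)
    · obtain ⟨α, hα⟩ := hw.resolve_right hf
      have hw' : (i.app j α, w.2) = w := Prod.ext hα rfl
      have hwmem : (i.app j α, w.2) ∈ S₀ j := hw' ▸ hw
      have hmap : (B ⊗ Δ[n]).map ψ w = (i.app j' (A.map ψ α), Δ[n].map ψ w.2) := by
        rw [← hw']
        exact congrArg (fun z => (z, Δ[n].map ψ w.2))
          ((types_congr_hom (i.naturality ψ) α).symm)
      have hmm : (i.app j' (A.map ψ α), Δ[n].map ψ w.2) ∈ S₀ j' := by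
        rw [← hmap]; exact hScl ψ w hw
      calc g₀ j' ((B ⊗ Δ[n]).map ψ w) (hScl ψ w hw)
          = g₀ j' (i.app j' (A.map ψ α), Δ[n].map ψ w.2) hmm :=
            g₀_congr j' ((B ⊗ Δ[n]).map ψ w) _ hmap (hScl ψ w hw) hmm
        _ = a.app j' (A.map ψ α, Δ[n].map ψ w.2) := gval_a j' (A.map ψ α) (Δ[n].map ψ w.2) hmm
        _ = X.map ψ (a.app j (α, w.2)) := types_congr_hom (a.naturality ψ) (α, w.2)
        _ = X.map ψ (g₀ j w hw) := by
            rw [(g₀_congr j _ _ hw' hwmem hw).symm, gval_a j α w.2 hwmem]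
  · intro j w hw
    by_cases hf : hornP k w.2
    · rw [gval_u j w hf hw]
      exact types_congr_hom (NatTrans.congr_app h2 j) (w.1, ⟨w.2, hf⟩)
    · obtain ⟨α, hα⟩ := hw.resolve_right hf
      have hw' : (i.app j α, w.2) = w := Prod.ext hα rfl
      have hwmem : (i.app j α, w.2) ∈ S₀ j := hw' ▸ hw
      rw [← g₀_congr j _ _ hw' hwmem hw, gval_a j α w.2 hwmem]
      have h3' := types_congr_hom (NatTrans.congr_app h3 j) (α, w.2)
      exact h3'.trans (congrArg (v.app j) hw')

end Base


/-! ### The core filling theorem -/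

section Core

open SimplexCategory Finset

/-- Filling `Δ[m] ⊗ Δ[n]` relative to `Δ[m] ⊗ Λ[n,k] ∪ (∂Δ[m] : SSet) ⊗ Δ[n]` against an
inner fibration. -/
theorem core {m n : ℕ} {k : Fin (n + 1)} (hk0 : 0 < k) (hkn : k < Fin.last n)
    {X Y : SSet.{u}} {p : X ⟶ Y} (hp : InnerFibration p)
    (u : Δ[m] ⊗ Λ[n, k] ⟶ X) (a : (∂Δ[m] : SSet) ⊗ Δ[n] ⟶ X) (v : Δ[m] ⊗ Δ[n] ⟶ Y)
    (h1 : (∂Δ[m].ι ▷ Λ[n, k]) ≫ u = ((∂Δ[m] : SSet) ◁ Λ[n, k].ι) ≫ a)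
    (h2 : u ≫ p = (Δ[m] ◁ Λ[n, k].ι) ≫ v)
    (h3 : a ≫ p = (∂Δ[m].ι ▷ Δ[n]) ≫ v) :
    ∃ L : Δ[m] ⊗ Δ[n] ⟶ X, (Δ[m] ◁ Λ[n, k].ι) ≫ L = u ∧
      (∂Δ[m].ι ▷ Δ[n]) ≫ L = a ∧ L ≫ p = v := by
  classical
  have hinj : ∀ j, Function.Injective ((∂Δ[m].ι).app j) :=
    fun j x y h => Subtype.ext h
  obtain ⟨P₀, hSc, hgu, hga⟩ := basePLift' k (∂Δ[m].ι) p u a v hinj h1 h2 h3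
  -- base domain in terms of supports
  have hbase_iff : ∀ (j : SimplexCategoryᵒᵖ) (w : (Δ[m] ⊗ Δ[n]).obj j),
      (w.1 ∈ Set.range ((∂Δ[m].ι).app j) ∨ hornP k w.2) ↔
        ¬ inCompl k (supp w) := by
    intro j w
    have hA : w.1 ∈ Set.range ((∂Δ[m].ι).app j) ↔
        ¬ Function.Surjective (SSet.stdSimplex.asOrderHom w.1) := by
      constructor
      · rintro ⟨α, hα⟩
        rw [← hα]
        exact α.2
      · intro h
        exact ⟨⟨w.1, h⟩, rfl⟩
    have hfst : Function.Surjective (SSet.stdSimplex.asOrderHom w.1) ↔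
        ∀ a' : Fin (m + 1), ∃ y ∈ supp w, y.1 = a' := by
      constructor
      · intro h a'
        obtain ⟨b, hb⟩ := h a'
        exact ⟨pm w b, mem_supp_iff.2 ⟨b, rfl⟩, hb⟩
      · intro h a'
        obtain ⟨y, hy, hy1⟩ := h a'
        obtain ⟨b, hb⟩ := mem_supp_iff.1 hy
        exact ⟨b, by rw [show SSet.stdSimplex.asOrderHom w.1 b = (pm w b).1 from rfl, hb, hy1]⟩
    have hsnd : (Set.range (SSet.stdSimplex.asOrderHom w.2) ∪ {k} = Set.univ) ↔
        ∀ b : Fin (n + 1), b ≠ k → ∃ y ∈ supp w, y.2 = b := by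
      constructor
      · intro h b hb
        rcases Set.eq_univ_iff_forall.1 h b with hr | hk'
        · obtain ⟨c, hc⟩ := hr
          exact ⟨pm w c, mem_supp_iff.2 ⟨c, rfl⟩, hc⟩
        · exact absurd hk' hb
      · intro h
        rw [Set.eq_univ_iff_forall]
        intro b
        by_cases hb : b = k
        · exact Or.inr hb
        · obtain ⟨y, hy, hy2⟩ := h b hb
          obtain ⟨c, hc⟩ := mem_supp_iff.1 hy
          exact Or.inl ⟨c, by rw [show SSet.stdSimplex.asOrderHom w.2 c = (pm w c).2 from rfl, hc, hy2]⟩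
    constructor
    · rintro (h | h) ⟨hc1, hc2⟩
      · exact (hA.1 h) (hfst.2 hc1)
      · exact h (hsnd.2 hc2)
    · intro h
      by_cases hs : Function.Surjective (SSet.stdSimplex.asOrderHom w.1)
      · refine Or.inr (fun hu' => h ⟨hfst.1 hs, hsnd.1 hu'⟩)
      · exact Or.inl (hA.2 hs)
  -- main induction over processed upper chains
  have main : ∀ (N : ℕ) (G : Finset (Finset (PP m n))), LSet k G → G.card = N →
      ∃ P : PLift' p v, P₀ ≤ P ∧
        ∀ (j : SimplexCategoryᵒᵖ) (w : (Δ[m] ⊗ Δ[n]).obj j),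
          w ∈ P.S j ↔ doneC k G (supp w) := by
    intro N
    induction N with
    | zero =>
      intro G hG hcard
      have hGE : G = ∅ := Finset.card_eq_zero.1 hcard
      subst hGE
      refine ⟨P₀, le_refl _, fun j w => ?_⟩
      rw [hSc j w, hbase_iff j w]
      constructor
      · exact fun h => Or.inl h
      · intro h
        refine h.resolve_right ?_
        rintro ⟨e, he, -⟩
        exact absurd he (Finset.notMem_empty e)
    | succ N ih =>
      intro G hG hcard
      have hne : G.Nonempty := Finset.card_pos.1 (by omega)
      obtain ⟨e, heG, hemax⟩ := Finset.exists_max_image G (rank k) hne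
      obtain ⟨ec, ecc, eup⟩ := hG.1 e heG
      set G' := G.erase e with hG'def
      have hG' : LSet k G' := by
        constructor
        · exact fun e' h' => hG.1 e' (Finset.mem_of_mem_erase h')
        · intro e1 h1 e2 h2 hrk
          refine Finset.mem_erase.2 ⟨?_, hG.2 e1 (Finset.mem_of_mem_erase h1) e2 h2 hrk⟩
          intro hh
          subst hh
          exact absurd (hemax e1 (Finset.mem_of_mem_erase h1)) (not_le.2 hrk)
      have hcard' : G'.card = N := by
        rw [hG'def, Finset.card_erase_of_mem heG, hcard]
        omega
      obtain ⟨P, hP0, hPS⟩ := ih G' hG' hcard'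
      have hepos : e.Nonempty := by
        obtain ⟨y, hy, -⟩ := ecc.1 0
        exact ⟨y, hy⟩
      set r := e.card - 1 with hrdef
      have he : e.card = r + 1 := by
        have := Finset.card_pos.2 hepos
        omega
      have henumℓ : enumC e r he (idxC e r he (βc k e, k) eup) = (βc k e, k) :=
        enumC_idxC e r he _ _
      set ℓ := idxC e r he (βc k e, k) eup with hℓdef
      set τ := τe e r he ec with hτdef
      have hsuppτ : supp τ = e := by
        apply Finset.Subset.antisymm
        · intro y hy
          obtain ⟨b, hb⟩ := mem_supp_iff.1 hy
          rw [← hb, hτdef, pm_τe]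
          exact enumC_mem e r he b
        · intro y hy
          obtain ⟨b, hb⟩ := enumC_surj e r he hy
          exact mem_supp_iff.2 ⟨b, by rw [hτdef, pm_τe]; exact hb⟩
      have h0 : 0 < ℓ := by
        obtain ⟨z, hz, hzlt⟩ := exists_lt_βc k ec ecc hk0 eup
        obtain ⟨az, haz⟩ := enumC_surj e r he hz
        have haℓ : az < ℓ := by
          by_contra hcon
          push_neg at hcon
          have := enumC_mono e r he ec hcon
          rw [henumℓ, haz] at this
          exact absurd (lt_of_lt_of_le hzlt this) (lt_irrefl _)
        exact lt_of_le_of_lt (Fin.zero_le az) haℓ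
      have hlast : ℓ < Fin.last r := by
        obtain ⟨z, hz, hzgt⟩ := exists_gt_βc k ec ecc hkn eup
        obtain ⟨az, haz⟩ := enumC_surj e r he hz
        have haℓ : ℓ < az := by
          by_contra hcon
          push_neg at hcon
          have := enumC_mono e r he ec hcon
          rw [henumℓ, haz] at this
          exact absurd (lt_of_le_of_lt this hzgt) (lt_irrefl _)
        exact lt_of_lt_of_le haℓ (Fin.le_last az)
      -- H1 : horn faces are already defined
      have H1 : ∀ {jj : SimplexCategory} (φ : jj ⟶ ⦋r⦌),
          Set.range φ.toOrderHom ∪ {ℓ} ≠ Set.univ →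
            (Δ[m] ⊗ Δ[n]).map φ.op τ ∈ P.S (op jj) := by
        intro jj φ hφ
        rw [hPS]
        obtain ⟨ℓ', hℓ'⟩ := (Set.ne_univ_iff_exists_notMem _).1 hφ
        have hℓ'r : ℓ' ∉ Set.range φ.toOrderHom := fun h => hℓ' (Or.inl h)
        have hℓ'ℓ : ℓ' ≠ ℓ := fun h => hℓ' (Or.inr (Set.mem_singleton_iff.2 h))
        have hvmem : enumC e r he ℓ' ∈ e := enumC_mem e r he ℓ'
        have hvne : enumC e r he ℓ' ≠ (βc k e, k) := by
          rw [← henumℓ]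
          intro h
          exact hℓ'ℓ (enumC_inj_lex e r he h)
        have hdchain : IsChain (· ≤ ·) (↑(e.erase (enumC e r he ℓ')) : Set (PP m n)) :=
          ec.mono (by simp [Finset.erase_subset])
        have hsubd : supp ((Δ[m] ⊗ Δ[n]).map φ.op τ) ⊆ e.erase (enumC e r he ℓ') := by
          intro y hy
          obtain ⟨b, hb⟩ := mem_supp_iff.1 hy
          rw [hτdef] at hb
          rw [congrFun (pm_map_τe e r he ec φ) b] at hb
          refine Finset.mem_erase.2 ⟨?_, by rw [← hb]; exact enumC_mem e r he _⟩
          rw [← hb]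
          intro h
          exact hℓ'r ⟨b, (enumC_inj_lex e r he h).symm ▸ rfl⟩
        have hdone_d : doneC k G' (e.erase (enumC e r he ℓ')) := by
          by_cases hdc : inCompl k (e.erase (enumC e r he ℓ'))
          · have hlt : rank k (e.erase (enumC e r he ℓ')) < rank k e :=
              rank_erase_lt k ec hvmem (by rintro ⟨-, h⟩; exact hvne h)
            obtain ⟨hh1, hh2, hh3, -, -⟩ := handler_spec k hdchain hdc
            have hrk : rank k (handler k (e.erase (enumC e r he ℓ'))) < rank k e := by
              rw [rank_handler k hdchain]
              exact hlt
            have hmem : handler k (e.erase (enumC e r he ℓ')) ∈ G :=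
              hG.2 e heG _ ⟨hh1, hh2, hh3⟩ hrk
            have hmem' : handler k (e.erase (enumC e r he ℓ')) ∈ G' := by
              refine Finset.mem_erase.2 ⟨?_, hmem⟩
              intro hh
              rw [hh] at hrk
              exact lt_irrefl _ hrk
            exact doneC_of_handler_mem k hdchain hdc hmem'
          · exact Or.inl hdc
        exact done_subset k hG' (e.erase (enumC e r he ℓ')).card _ (le_refl _)
          hdchain hdone_d _ hsubd
      -- H2 : the two new simplices are not yet defined
      have H2 : ∀ {jj : SimplexCategory} (φ : jj ⟶ ⦋r⦌),
          Set.range φ.toOrderHom ∪ {ℓ} = Set.univ →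
            (Δ[m] ⊗ Δ[n]).map φ.op τ ∉ P.S (op jj) := by
        intro jj φ hφ hmem
        rw [hPS] at hmem
        have hsube : supp ((Δ[m] ⊗ Δ[n]).map φ.op τ) ⊆ e := by
          refine (supp_map_subset φ.op τ).trans ?_
          rw [hsuppτ]
        have herase : e.erase (βc k e, k) ⊆ supp ((Δ[m] ⊗ Δ[n]).map φ.op τ) := by
          intro y hy
          rw [Finset.mem_erase] at hy
          obtain ⟨ay, hay⟩ := enumC_surj e r he hy.2
          have hayℓ : ay ≠ ℓ := by
            intro h
            rw [h, henumℓ] at hay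
            exact hy.1 hay.symm
          have hrange : ay ∈ Set.range φ.toOrderHom := by
            rcases Set.eq_univ_iff_forall.1 hφ ay with h | h
            · exact h
            · exact absurd (Set.mem_singleton_iff.1 h) hayℓ
          obtain ⟨b, hb⟩ := hrange
          refine mem_supp_iff.2 ⟨b, ?_⟩
          rw [hτdef, congrFun (pm_map_τe e r he ec φ) b]
          show enumC e r he (φ.toOrderHom b) = y
          rw [hb, hay]
        have hsupp2 : supp ((Δ[m] ⊗ Δ[n]).map φ.op τ) = e ∨
            supp ((Δ[m] ⊗ Δ[n]).map φ.op τ) = e.erase (βc k e, k) := by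
          by_cases hin : ℓ ∈ Set.range φ.toOrderHom
          · left
            apply Finset.Subset.antisymm hsube
            intro y hy
            rcases eq_or_ne y (βc k e, k) with rfl | hne
            · obtain ⟨b, hb⟩ := hin
              refine mem_supp_iff.2 ⟨b, ?_⟩
              rw [hτdef, congrFun (pm_map_τe e r he ec φ) b]
              show enumC e r he (φ.toOrderHom b) = _
              rw [hb, henumℓ]
            · exact herase (Finset.mem_erase.2 ⟨hne, hy⟩)
          · right
            apply Finset.Subset.antisymm
            · intro y hy
              obtain ⟨b, hb⟩ := mem_supp_iff.1 hy
              rw [hτdef, congrFun (pm_map_τe e r he ec φ) b] at hb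
              refine Finset.mem_erase.2 ⟨?_, by rw [← hb]; exact enumC_mem e r he _⟩
              rw [← hb, ← henumℓ]
              intro h
              exact hin ⟨b, enumC_inj_lex e r he h⟩
            · exact herase
        have hccs : inCompl k (supp ((Δ[m] ⊗ Δ[n]).map φ.op τ)) := by
          rcases hsupp2 with h | h
          · rw [h]; exact ecc
          · rw [h]; exact inCompl_erase_βc k ec ecc hk0 eup
        obtain ⟨hhm, -⟩ := done_handler_mem k hG' hmem hccs
        have hhe : handler k (supp ((Δ[m] ⊗ Δ[n]).map φ.op τ)) = e := by
          rcases hsupp2 with h | h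
          · rw [h, handler_up k eup]
          · rw [h]
            have hβ := βc_erase k ec eup
            rw [handler_low k (by rw [isUp, hβ]; simp), hβ, Finset.insert_erase eup]
        rw [hhe] at hhm
        exact absurd hhm (Finset.notMem_erase e G)
      obtain ⟨Q, hPQ, hQS⟩ := PLift'.extend_horn p v P hp r ℓ h0 hlast τ
        (fun φ φ' h => τe_inj e r he ec φ φ' h) (fun φ h => H1 φ h) (fun φ h => H2 φ h)
      refine ⟨Q, le_trans hP0 hPQ, ?_⟩
      intro j w
      rw [hQS j w]
      constructor
      · rintro (hw | ⟨φ, rfl⟩)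
        · rcases (hPS j w).1 hw with h | ⟨e', he', hh⟩
          · exact Or.inl h
          · exact Or.inr ⟨e', Finset.mem_of_mem_erase he', hh⟩
        · have hsub : supp ((Δ[m] ⊗ Δ[n]).map φ.op τ) ⊆ e := by
            refine (supp_map_subset φ.op τ).trans ?_
            rw [hsuppτ]
          exact done_subset k hG e.card e (le_refl _) ec
            (Or.inr ⟨e, heG, Or.inl rfl⟩) _ hsub
      · intro hdone
        by_cases hw' : doneC k G' (supp w)
        · exact Or.inl ((hPS j w).2 hw')
        · rcases hdone with hnc | ⟨e', he', hh⟩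
          · exact absurd (Or.inl hnc) hw'
          · have hee : e' = e := by
              by_contra hne'
              exact hw' (Or.inr ⟨e', Finset.mem_erase.2 ⟨hne', he'⟩, hh⟩)
            subst hee
            have hsub : supp w ⊆ e' := by
              rcases hh with h | h
              · rw [h]
              · rw [h]; exact Finset.erase_subset _ _
            obtain ⟨φ, hφ⟩ := exists_factor e' r he ec w hsub
            exact Or.inr ⟨φ, hφ⟩
  -- conclude
  have hUpsLS : LSet k (Ups (m := m) k) :=
    ⟨fun e' he' => (mem_Ups k).1 he', fun e' he' e'' hUC _ => (mem_Ups k).2 hUC⟩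
  obtain ⟨P, hP0, hPS⟩ := main (Ups (m := m) k).card (Ups k) hUpsLS rfl
  have htot : ∀ (j : SimplexCategoryᵒᵖ) (w : (Δ[m] ⊗ Δ[n]).obj j), w ∈ P.S j := by
    intro j w
    rw [hPS]
    by_cases hcc : inCompl k (supp w)
    · obtain ⟨hh1, hh2, hh3, -, -⟩ := handler_spec k (supp_chain w) hcc
      exact doneC_of_handler_mem k (supp_chain w) hcc ((mem_Ups k).2 ⟨hh1, hh2, hh3⟩)
    · exact Or.inl hcc
  refine ⟨{ app := fun j => TypeCat.ofHom fun w => P.g j w (htot j w)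
            naturality := by
              intro j j' ψ
              ext w
              exact P.hnat' ψ w (htot j w) (htot j' _) rfl }, ?_, ?_, ?_⟩
  · ext j x
    show P.g j (x.1, x.2.1) (htot j _) = u.app j x
    have hmem : (x.1, x.2.1) ∈ P₀.S j := (hSc j _).2 (Or.inr x.2.2)
    rw [hP0.2 j _ hmem (htot j _)]
    exact hgu j (x.1, x.2.1) x.2.2 hmem
  · ext j x
    have hmem : ((∂Δ[m].ι).app j x.1, x.2) ∈ P₀.S j :=
      (hSc j _).2 (Or.inl ⟨x.1, rfl⟩)
    exact (hP0.2 j ((∂Δ[m].ι).app j x.1, x.2) hmem (htot j _)).trans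
      (hga j x.1 x.2 hmem)
  · ext j w
    exact P.hcomp j w (htot j w)

end Core


/-! ### Sections of epimorphisms in the simplex category -/

section EpiSection

open SimplexCategory

lemma exists_section_at {jj : SimplexCategory} {d : ℕ} (s : jj ⟶ ⦋d⦌)
    (hs : Function.Surjective s.toOrderHom) (x : Fin (jj.len + 1)) :
    ∃ t : (⦋d⦌ : SimplexCategory) ⟶ jj, t ≫ s = 𝟙 _ ∧
      t.toOrderHom (s.toOrderHom x) = x := by
  classical
  set f := s.toOrderHom with hf
  have hne : ∀ v : Fin (d + 1), (Finset.univ.filter (fun w => f w = v)).Nonempty := by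
    intro v
    obtain ⟨w, hw⟩ := hs v
    exact ⟨w, Finset.mem_filter.2 ⟨Finset.mem_univ _, hw⟩⟩
  set msec : Fin (d + 1) → Fin (jj.len + 1) :=
    fun v => (Finset.univ.filter (fun w => f w = v)).min' (hne v) with hmsecdef
  have hmsec : ∀ v, f (msec v) = v :=
    fun v => (Finset.mem_filter.1 ((Finset.univ.filter _).min'_mem (hne v))).2
  set g : Fin (d + 1) → Fin (jj.len + 1) :=
    fun v => if v = f x then x else msec v with hgdef
  have hg : ∀ v, f (g v) = v := by
    intro v
    by_cases h : v = f x
    · rw [hgdef]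
      simp only [if_pos h]
      exact h.symm
    · rw [hgdef]
      simp only [if_neg h]
      exact hmsec v
  have hmono : Monotone g := by
    intro v v' hvv
    rcases eq_or_lt_of_le hvv with rfl | hlt
    · exact le_refl _
    by_cases h1 : v = f x <;> by_cases h2 : v' = f x
    · exact absurd (h1.symm ▸ h2.symm ▸ hlt) (lt_irrefl _)
    · rw [hgdef]
      simp only [if_pos h1, if_neg h2]
      by_contra hcon
      push_neg at hcon
      have := s.toOrderHom.monotone hcon.le
      rw [hmsec] at this
      rw [← h1] at this
      exact absurd (lt_of_lt_of_le hlt this) (lt_irrefl _)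
    · rw [hgdef]
      simp only [if_neg h1, if_pos h2]
      by_contra hcon
      push_neg at hcon
      have := s.toOrderHom.monotone hcon.le
      rw [hmsec] at this
      rw [← h2] at this
      exact absurd (lt_of_lt_of_le hlt this) (lt_irrefl _)
    · rw [hgdef]
      simp only [if_neg h1, if_neg h2]
      by_contra hcon
      push_neg at hcon
      have := s.toOrderHom.monotone hcon.le
      rw [hmsec, hmsec] at this
      exact absurd (lt_of_lt_of_le hlt this) (lt_irrefl _)
  refine ⟨SimplexCategory.Hom.mk ⟨g, hmono⟩, ?_, ?_⟩
  · apply SimplexCategory.Hom.ext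
    apply OrderHom.ext
    funext v
    exact hg v
  · show g (f x) = x
    rw [hgdef]
    simp

end EpiSection

/-! ### Lifting against general monomorphisms -/

section MonoLift

open SimplexCategory

variable {n : ℕ} (k : Fin (n + 1)) {B X Y : SSet.{u}} (p : X ⟶ Y)
variable (v : B ⊗ Δ[n] ⟶ Y) (P₀ : PLift' p v)

/-- A partial lift defined on `T ⊗ Δ[n] ∪ B ⊗ Λ[n,k]` for a simplicial subset
`T` of `B`. -/
structure ML where
  T : ∀ j : SimplexCategoryᵒᵖ, Set (B.obj j)
  hT : ∀ {j j' : SimplexCategoryᵒᵖ} (ψ : j ⟶ j') (x : B.obj j), x ∈ T j → B.map ψ x ∈ T j'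
  P : PLift' p v
  hS : ∀ (j) (w : (B ⊗ Δ[n]).obj j), w ∈ P.S j ↔ (w.1 ∈ T j ∨ hornP k w.2)
  hle : P₀ ≤ P

instance : Preorder (ML k p v P₀) where
  le M M' := (∀ j, M.T j ⊆ M'.T j) ∧ M.P ≤ M'.P
  le_refl M := ⟨fun j => subset_rfl, le_refl _⟩
  le_trans M M' M'' h h' := ⟨fun j => (h.1 j).trans (h'.1 j), le_trans h.2 h'.2⟩

end MonoLift

section CoreGen

open SimplexCategory

/-- Lifting `B ⊗ Δ[n]` relative to `B ⊗ Λ[n,k] ∪ A ⊗ Δ[n]` against an inner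
fibration, for an arbitrary monomorphism `A ⟶ B`. -/
theorem coreGen {n : ℕ} {k : Fin (n + 1)} (hk0 : 0 < k) (hkn : k < Fin.last n)
    {A B X Y : SSet.{u}} (i : A ⟶ B) (hinj : ∀ j, Function.Injective (i.app j))
    {p : X ⟶ Y} (hp : InnerFibration p)
    (u : B ⊗ Λ[n, k] ⟶ X) (a : A ⊗ Δ[n] ⟶ X) (v : B ⊗ Δ[n] ⟶ Y)
    (h1 : (i ▷ Λ[n, k]) ≫ u = (A ◁ Λ[n, k].ι) ≫ a)
    (h2 : u ≫ p = (B ◁ Λ[n, k].ι) ≫ v)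
    (h3 : a ≫ p = (i ▷ Δ[n]) ≫ v) :
    ∃ L : B ⊗ Δ[n] ⟶ X, (B ◁ Λ[n, k].ι) ≫ L = u ∧
      (i ▷ Δ[n]) ≫ L = a ∧ L ≫ p = v := by
  classical
  obtain ⟨P₀, hSc, hgu, hga⟩ := basePLift' k i p u a v hinj h1 h2 h3
  -- the base object
  have hT₀cl : ∀ {j j' : SimplexCategoryᵒᵖ} (ψ : j ⟶ j') (x : B.obj j),
      x ∈ Set.range (i.app j) → B.map ψ x ∈ Set.range (i.app j') := by
    rintro j j' ψ x ⟨α, rfl⟩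
    exact ⟨A.map ψ α, types_congr_hom (i.naturality ψ) α⟩
  let M₀ : ML k p v P₀ :=
    { T := fun j => Set.range (i.app j)
      hT := hT₀cl
      P := P₀
      hS := hSc
      hle := le_refl _ }
  haveI : Nonempty (ML k p v P₀) := ⟨M₀⟩
  -- Zorn's lemma
  have hzorn : ∀ c : Set (ML k p v P₀), IsChain (· ≤ ·) c → c.Nonempty → BddAbove c := by
    intro c hc hcne
    -- upper bound of a nonempty chain
    obtain ⟨Mc, hMc⟩ := hcne
    have hval : ∀ (M₁ : ML k p v P₀), M₁ ∈ c → ∀ (M₂ : ML k p v P₀), M₂ ∈ c →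
        ∀ (j) (x) (hx1 : x ∈ M₁.P.S j) (hx2 : x ∈ M₂.P.S j),
        M₁.P.g j x hx1 = M₂.P.g j x hx2 := by
      intro M₁ h₁ M₂ h₂ j x hx1 hx2
      rcases eq_or_ne M₁ M₂ with rfl | hne
      · rfl
      · rcases hc h₁ h₂ hne with h | h
        · exact (h.2.2 j x hx1 hx2).symm
        · exact h.2.2 j x hx2 hx1
    set SU : ∀ j : SimplexCategoryᵒᵖ, Set ((B ⊗ Δ[n]).obj j) :=
      fun j => {w | ∃ M' ∈ c, w ∈ M'.P.S j} with hSUdef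
    have hSUcl : ∀ {j j' : SimplexCategoryᵒᵖ} (ψ : j ⟶ j') (w : (B ⊗ Δ[n]).obj j),
        w ∈ SU j → (B ⊗ Δ[n]).map ψ w ∈ SU j' := by
      rintro j j' ψ w ⟨M', hM', hw⟩
      exact ⟨M', hM', M'.P.hS ψ w hw⟩
    let gU : ∀ (j) (w : (B ⊗ Δ[n]).obj j), w ∈ SU j → X.obj j :=
      fun j w hw => (Classical.choose hw).P.g j w
        (Classical.choose_spec hw).2
    have hgUchoose : ∀ (j) (w : (B ⊗ Δ[n]).obj j) (hw : w ∈ SU j),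
        (Classical.choose hw) ∈ c := fun j w hw => (Classical.choose_spec hw).1
    have hgU : ∀ (j) (w : (B ⊗ Δ[n]).obj j) (hw : w ∈ SU j) (M' : ML k p v P₀)
        (hM' : M' ∈ c) (hw' : w ∈ M'.P.S j), gU j w hw = M'.P.g j w hw' := by
      intro j w hw M' hM' hw'
      exact hval _ (hgUchoose j w hw) M' hM' j w _ hw'
    refine ⟨{ T := fun j => {x | ∃ M' ∈ c, x ∈ M'.T j}
              hT := ?_
              P := { S := SU, hS := hSUcl, g := gU, hnat := ?_, hcomp := ?_ }
              hS := ?_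
              hle := ?_ }, ?_⟩
    · rintro j j' ψ x ⟨M', hM', hx⟩
      exact ⟨M', hM', M'.hT ψ x hx⟩
    · intro j j' ψ w hw
      obtain ⟨M', hM', hw'⟩ := hw
      rw [hgU j w _ M' hM' hw', hgU j' _ (hSUcl ψ w ⟨M', hM', hw'⟩) M' hM' (M'.P.hS ψ w hw')]
      exact M'.P.hnat ψ w hw'
    · intro j w hw
      obtain ⟨M', hM', hw'⟩ := hw
      rw [hgU j w _ M' hM' hw']
      exact M'.P.hcomp j w hw'
    · intro j w
      constructor
      · rintro ⟨M', hM', hw⟩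
        rcases (M'.hS j w).1 hw with h | h
        · exact Or.inl ⟨M', hM', h⟩
        · exact Or.inr h
      · rintro (⟨M', hM', hx⟩ | hf)
        · exact ⟨M', hM', (M'.hS j w).2 (Or.inl hx)⟩
        · exact ⟨Mc, hMc, (Mc.hS j w).2 (Or.inr hf)⟩
    · refine le_trans Mc.hle ⟨fun j w hw => ⟨Mc, hMc, hw⟩, ?_⟩
      intro j x hx hx'
      exact hgU j x hx' Mc hMc hx
    · -- upper bound property
      intro M' hM'
      refine ⟨fun j x hx => ⟨M', hM', hx⟩, fun j w hw => ⟨M', hM', hw⟩, ?_⟩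
      intro j x hx hx'
      exact hgU j x hx' M' hM' hx
  obtain ⟨M, hM⟩ := zorn_le_nonempty hzorn
  -- helper values of the maximal lift
  have hMu : ∀ (j) (w : (B ⊗ Δ[n]).obj j) (hf : hornP k w.2) (hw : w ∈ M.P.S j),
      M.P.g j w hw = u.app j (w.1, ⟨w.2, hf⟩) := by
    intro j w hf hw
    have hw0 : w ∈ P₀.S j := (hSc j w).2 (Or.inr hf)
    exact (M.hle.2 j w hw0 hw).trans (hgu j w hf hw0)
  have hMa : ∀ (j) (α : A.obj j) (f : Δ[n].obj j) (hw : (i.app j α, f) ∈ M.P.S j),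
      M.P.g j (i.app j α, f) hw = a.app j (α, f) := by
    intro j α f hw
    have hw0 : (i.app j α, f) ∈ P₀.S j := (hSc j _).2 (Or.inl ⟨α, rfl⟩)
    exact (M.hle.2 j _ hw0 hw).trans (hga j α f hw0)
  -- T is everything
  have hstep : ∀ (d : ℕ) (σ : B.obj (op ⦋d⦌)), σ ∉ M.T (op ⦋d⦌) →
      (∀ (jj : SimplexCategory), jj.len < d → ∀ x : B.obj (op jj), x ∈ M.T (op jj)) →
      False := by
    intro d σ hσ hmin
    have hBcomp : ∀ {j j' : SimplexCategoryᵒᵖ} (ψ : j ⟶ j') (φ : j.unop ⟶ ⦋d⦌),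
        B.map ψ (B.map φ.op σ) = B.map (ψ.unop ≫ φ).op σ := by
      intro j j' ψ φ
      rw [← FunctorToTypes.map_comp_apply]
      rfl
    -- faces of σ are already in T
    have hlow : ∀ {jj : SimplexCategory} (φ : jj ⟶ ⦋d⦌),
        ¬ Function.Surjective φ.toOrderHom → B.map φ.op σ ∈ M.T (op jj) := by
      intro jj φ hns
      have hd : d ≠ 0 := by
        rintro rfl
        refine hns (fun b => ⟨0, ?_⟩)
        have h1 : (φ.toOrderHom 0).val < 0 + 1 := (φ.toOrderHom 0).isLt
        have h2 : b.val < 0 + 1 := b.isLt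
        exact Fin.ext (by omega)
      obtain ⟨d', hd'⟩ := Nat.exists_eq_succ_of_ne_zero hd
      subst hd'
      obtain ⟨bi, θ', hθ⟩ := SimplexCategory.eq_comp_δ_of_not_surjective φ hns
      have hδ : B.map (SimplexCategory.δ bi).op σ ∈ M.T (op ⦋d'⦌) := by
        refine hmin ⦋d'⦌ ?_ _
        rw [SimplexCategory.len_mk]
        omega
      have hmm : B.map φ.op σ = B.map θ'.op (B.map (SimplexCategory.δ bi).op σ) := by
        rw [hθ, ← FunctorToTypes.map_comp_apply]
        rfl
      rw [hmm]
      exact M.hT θ'.op _ hδ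
    -- σ is rigid
    have hrig : ∀ (e : (⦋d⦌ : SimplexCategory) ⟶ ⦋d⦌), B.map e.op σ = σ → e = 𝟙 _ := by
      intro e he
      by_cases hepi : Function.Surjective e.toOrderHom
      · haveI : Epi e := SimplexCategory.epi_iff_surjective.2 hepi
        exact SimplexCategory.eq_id_of_epi e
      · exact absurd (he ▸ hlow e hepi) hσ
    have huniq : ∀ {jj : SimplexCategory} (s s' : jj ⟶ ⦋d⦌),
        Function.Surjective s.toOrderHom → Function.Surjective s'.toOrderHom →
        B.map s.op σ = B.map s'.op σ → s = s' := by
      intro jj s s' hs hs' hss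
      apply SimplexCategory.Hom.ext
      apply OrderHom.ext
      funext x
      obtain ⟨t, ht1, ht2⟩ := exists_section_at s hs x
      have hcomp2 : B.map (t ≫ s').op σ = σ := by
        have : B.map (t ≫ s').op σ = B.map t.op (B.map s'.op σ) := by
          rw [← FunctorToTypes.map_comp_apply]
          rfl
        rw [this, ← hss, ← FunctorToTypes.map_comp_apply]
        show B.map (t ≫ s).op σ = σ
        rw [ht1]
        exact FunctorToTypes.map_id_apply B σ
      have hid := hrig (t ≫ s') hcomp2
      have heval := congrArg (fun hhh => SimplexCategory.Hom.toOrderHom hhh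
        (s.toOrderHom x)) hid
      show s.toOrderHom x = s'.toOrderHom x
      calc s.toOrderHom x
          = s'.toOrderHom (t.toOrderHom (s.toOrderHom x)) := by
            exact heval.symm
        _ = s'.toOrderHom x := by rw [ht2]
    -- the attaching map
    let oE : ∀ (j : SimplexCategoryᵒᵖ), (Δ[d].obj j) ≃ (j.unop ⟶ ⦋d⦌) :=
      fun j => SSet.stdSimplex.objEquiv (n := ⦋d⦌) (m := j)
    let σh : Δ[d] ⟶ B :=
      { app := fun jj => TypeCat.ofHom fun f => B.map ((oE jj) f).op σ
        naturality := by
          intro jj jj' ψ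
          apply ConcreteCategory.hom_ext
          intro f
          dsimp only [types_comp_apply]
          show B.map ((oE jj') (Δ[d].map ψ f)).op σ = B.map ψ (B.map ((oE jj) f).op σ)
          rw [← FunctorToTypes.map_comp_apply]
          rfl }
    let uσ : Δ[d] ⊗ Λ[n, k] ⟶ X := (σh ▷ Λ[n, k]) ≫ u
    let vσ : Δ[d] ⊗ Δ[n] ⟶ Y := (σh ▷ Δ[n]) ≫ v
    have haσmem : ∀ (j : SimplexCategoryᵒᵖ) (w : ((∂Δ[d] : SSet) ⊗ Δ[n]).obj j),
        (B.map ((oE j) w.1.1).op σ, w.2) ∈ M.P.S j :=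
      fun j w => (M.hS j _).2 (Or.inl (hlow _ w.1.2))
    let aσ : (∂Δ[d] : SSet) ⊗ Δ[n] ⟶ X :=
      { app := fun j => TypeCat.ofHom fun w => M.P.g j (B.map ((oE j) w.1.1).op σ, w.2) (haσmem j w)
        naturality := by
          intro j j' ψ
          ext w
          exact M.P.hnat' ψ _ (haσmem j w) (haσmem j' _)
            (congrArg (fun z => (z, Δ[n].map ψ w.2)) (hBcomp ψ ((oE j) w.1.1)).symm) }
    have h1σ : (∂Δ[d].ι ▷ Λ[n, k]) ≫ uσ =
        ((∂Δ[d] : SSet) ◁ Λ[n, k].ι) ≫ aσ := by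
      ext j w
      exact (hMu j (B.map ((oE j) w.1.1).op σ, w.2.1) w.2.2 (haσmem j (w.1, w.2.1))).symm
    have h2σ : uσ ≫ p = (Δ[d] ◁ Λ[n, k].ι) ≫ vσ := by
      calc uσ ≫ p = (σh ▷ Λ[n, k]) ≫ (u ≫ p) := Category.assoc _ _ _
        _ = (σh ▷ Λ[n, k]) ≫ (B ◁ Λ[n, k].ι) ≫ v := by rw [h2]
        _ = ((σh ▷ Λ[n, k]) ≫ (B ◁ Λ[n, k].ι)) ≫ v := (Category.assoc _ _ _).symm
        _ = ((Δ[d] ◁ Λ[n, k].ι) ≫ (σh ▷ Δ[n])) ≫ v := by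
            rw [← whisker_exchange]
        _ = (Δ[d] ◁ Λ[n, k].ι) ≫ vσ := Category.assoc _ _ _
    have h3σ : aσ ≫ p = (∂Δ[d].ι ▷ Δ[n]) ≫ vσ := by
      ext j w
      exact M.P.hcomp j _ (haσmem j w)
    obtain ⟨ℓf, hu', ha', hp'⟩ := core hk0 hkn hp uσ aσ vσ h1σ h2σ h3σ
    -- values of the filler on old simplices
    have hℓin : ∀ (j : SimplexCategoryᵒᵖ) (φ : j.unop ⟶ ⦋d⦌) (f : Δ[n].obj j)
        (hmem : (B.map φ.op σ, f) ∈ M.P.S j),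
        ℓf.app j ((oE j).symm φ, f) = M.P.g j (B.map φ.op σ, f) hmem := by
      intro j φ f hmem
      rcases (M.hS j _).1 hmem with hT | hf
      · have hns : ¬ Function.Surjective φ.toOrderHom := by
          intro hsur
          obtain ⟨t, ht1, -⟩ := exists_section_at φ hsur 0
          have : σ = B.map t.op (B.map φ.op σ) := by
            rw [← FunctorToTypes.map_comp_apply]
            show σ = B.map (t ≫ φ).op σ
            rw [ht1]
            exact (FunctorToTypes.map_id_apply B σ).symm
          rw [this] at hσ
          exact hσ (M.hT t.op _ hT)
        exact types_congr_hom (NatTrans.congr_app ha' j) (⟨(oE j).symm φ, hns⟩, f)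
      · exact (types_congr_hom (NatTrans.congr_app hu' j) ((oE j).symm φ, ⟨f, hf⟩)).trans
          (hMu j (B.map φ.op σ, f) hf hmem).symm
    -- the extended lift
    set T' : ∀ j : SimplexCategoryᵒᵖ, Set (B.obj j) :=
      fun j => M.T j ∪ {x | ∃ φ : j.unop ⟶ ⦋d⦌, x = B.map φ.op σ} with hT'def
    have hT'cl : ∀ {j j' : SimplexCategoryᵒᵖ} (ψ : j ⟶ j') (x : B.obj j),
        x ∈ T' j → B.map ψ x ∈ T' j' := by
      rintro j j' ψ x (hx | ⟨φ, rfl⟩)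
      · exact Or.inl (M.hT ψ x hx)
      · exact Or.inr ⟨ψ.unop ≫ φ, hBcomp ψ φ⟩
    set S' : ∀ j : SimplexCategoryᵒᵖ, Set ((B ⊗ Δ[n]).obj j) :=
      fun j => {w | w.1 ∈ T' j ∨ hornP k w.2} with hS'def
    have hS'cl : ∀ {j j' : SimplexCategoryᵒᵖ} (ψ : j ⟶ j') (w : (B ⊗ Δ[n]).obj j),
        w ∈ S' j → (B ⊗ Δ[n]).map ψ w ∈ S' j' := by
      rintro j j' ψ w (hx | hf)
      · exact Or.inl (hT'cl ψ w.1 hx)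
      · exact Or.inr (hornP_map k ψ hf)
    have hS'sup : ∀ (j) (w : (B ⊗ Δ[n]).obj j), w ∈ M.P.S j → w ∈ S' j := by
      intro j w hw
      rcases (M.hS j w).1 hw with h | h
      · exact Or.inl (Or.inl h)
      · exact Or.inr h
    have hresolve : ∀ (j) (w : (B ⊗ Δ[n]).obj j), w ∈ S' j → w ∉ M.P.S j →
        ∃ φ : j.unop ⟶ ⦋d⦌, w.1 = B.map φ.op σ := by
      intro j w hw h
      rcases hw with (hx | ⟨φ, hφ⟩) | hf
      · exact absurd ((M.hS j w).2 (Or.inl hx)) h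
      · exact ⟨φ, hφ⟩
      · exact absurd ((M.hS j w).2 (Or.inr hf)) h
    have hepi_new : ∀ (j) (w : (B ⊗ Δ[n]).obj j), w ∉ M.P.S j →
        ∀ φ : j.unop ⟶ ⦋d⦌, w.1 = B.map φ.op σ → Function.Surjective φ.toOrderHom := by
      intro j w hw φ hφ
      by_contra hns
      exact hw ((M.hS j w).2 (Or.inl (by rw [hφ]; exact hlow φ hns)))
    let g' : ∀ (j : SimplexCategoryᵒᵖ) (w : (B ⊗ Δ[n]).obj j), w ∈ S' j → X.obj j :=
      fun j w hw =>
        if h : w ∈ M.P.S j then M.P.g j w h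
        else ℓf.app j ((oE j).symm (Classical.choose (hresolve j w hw h)), w.2)
    have gval_old : ∀ (j) (w : (B ⊗ Δ[n]).obj j) (hw : w ∈ S' j) (h : w ∈ M.P.S j),
        g' j w hw = M.P.g j w h := fun j w hw h => dif_pos h
    have gval_new : ∀ (j) (w : (B ⊗ Δ[n]).obj j) (hw : w ∈ S' j) (h : w ∉ M.P.S j)
        (φ : j.unop ⟶ ⦋d⦌) (hφ : w.1 = B.map φ.op σ),
        g' j w hw = ℓf.app j ((oE j).symm φ, w.2) := by
      intro j w hw h φ hφ
      have hsp := Classical.choose_spec (hresolve j w hw h)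
      have : Classical.choose (hresolve j w hw h) = φ :=
        huniq _ _ (hepi_new j w h _ hsp) (hepi_new j w h _ hφ) (by rw [← hsp, ← hφ])
      show (if h' : w ∈ M.P.S j then _ else _) = _
      rw [dif_neg h, this]
    -- assembling the new ML
    have hnat' : ∀ {j j' : SimplexCategoryᵒᵖ} (ψ : j ⟶ j') (w : (B ⊗ Δ[n]).obj j)
        (hw : w ∈ S' j),
        g' j' ((B ⊗ Δ[n]).map ψ w) (hS'cl ψ w hw) = X.map ψ (g' j w hw) := by
      intro j j' ψ w hw
      by_cases h : w ∈ M.P.S j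
      · rw [gval_old j w hw h, gval_old j' _ (hS'cl ψ w hw) (M.P.hS ψ w h)]
        exact M.P.hnat ψ w h
      · obtain ⟨φ, hφ⟩ := hresolve j w hw h
        rw [gval_new j w hw h φ hφ]
        have hy1 : ((B ⊗ Δ[n]).map ψ w).1 = B.map (ψ.unop ≫ φ).op σ := by
          show B.map ψ w.1 = _
          rw [hφ, hBcomp]
        have hℓnat : ℓf.app j' ((oE j').symm (ψ.unop ≫ φ), Δ[n].map ψ w.2) =
            X.map ψ (ℓf.app j ((oE j).symm φ, w.2)) :=
          types_congr_hom (ℓf.naturality ψ) ((oE j).symm φ, w.2)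
        by_cases hy : (B ⊗ Δ[n]).map ψ w ∈ M.P.S j'
        · rw [gval_old j' _ (hS'cl ψ w hw) hy]
          have hmem' : (B.map (ψ.unop ≫ φ).op σ, Δ[n].map ψ w.2) ∈ M.P.S j' := by
            have : (B.map (ψ.unop ≫ φ).op σ, Δ[n].map ψ w.2) = (B ⊗ Δ[n]).map ψ w :=
              (congrArg (fun z => (z, Δ[n].map ψ w.2)) hy1).symm
            rw [this]
            exact hy
          calc M.P.g j' ((B ⊗ Δ[n]).map ψ w) hy
              = M.P.g j' (B.map (ψ.unop ≫ φ).op σ, Δ[n].map ψ w.2) hmem' :=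
                M.P.g_congr (congrArg (fun z => (z, Δ[n].map ψ w.2)) hy1) hy hmem'
            _ = ℓf.app j' ((oE j').symm (ψ.unop ≫ φ), Δ[n].map ψ w.2) :=
                (hℓin j' (ψ.unop ≫ φ) (Δ[n].map ψ w.2) hmem').symm
            _ = X.map ψ (ℓf.app j ((oE j).symm φ, w.2)) := hℓnat
        · rw [gval_new j' _ (hS'cl ψ w hw) hy (ψ.unop ≫ φ) hy1]
          exact hℓnat
    have hcomp' : ∀ (j : SimplexCategoryᵒᵖ) (w : (B ⊗ Δ[n]).obj j) (hw : w ∈ S' j),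
        p.app j (g' j w hw) = v.app j w := by
      intro j w hw
      by_cases h : w ∈ M.P.S j
      · rw [gval_old j w hw h]
        exact M.P.hcomp j w h
      · obtain ⟨φ, hφ⟩ := hresolve j w hw h
        rw [gval_new j w hw h φ hφ]
        have := types_congr_hom (NatTrans.congr_app hp' j) ((oE j).symm φ, w.2)
        exact this.trans (congrArg (v.app j) (Prod.ext hφ.symm rfl))
    let M' : ML k p v P₀ :=
      { T := T'
        hT := hT'cl
        P := { S := S', hS := hS'cl, g := g', hnat := hnat', hcomp := hcomp' }
        hS := fun j w => Iff.rfl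
        hle := le_trans M.hle ⟨hS'sup, fun j w hw hw' => gval_old j w hw' hw⟩ }
    have hMM' : M ≤ M' := ⟨fun j x hx => Or.inl hx,
      hS'sup, fun j w hw hw' => gval_old j w hw' hw⟩
    have hM'M := hM hMM'
    have hσT' : σ ∈ T' (op ⦋d⦌) :=
      Or.inr ⟨𝟙 (⦋d⦌ : SimplexCategory), (FunctorToTypes.map_id_apply B σ).symm⟩
    exact hσ (hM'M.1 (op ⦋d⦌) hσT')
  have hTtop : ∀ (j) (x : B.obj j), x ∈ M.T j := by
    by_contra hcon
    push_neg at hcon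
    obtain ⟨j₀, x₀, hx₀⟩ := hcon
    have hex : ∃ d : ℕ, ∃ x : B.obj (op ⦋d⦌), x ∉ M.T (op ⦋d⦌) := by
      refine ⟨(unop j₀).len, ?_⟩
      have hj : (op ⦋(unop j₀).len⦌ : SimplexCategoryᵒᵖ) = j₀ := by
        rw [SimplexCategory.mk_len]
      rw [hj]
      exact ⟨x₀, hx₀⟩
    obtain ⟨σ, hσ⟩ := Nat.find_spec hex
    refine hstep (Nat.find hex) σ hσ ?_
    intro jj hlen x
    by_contra hxx
    have hne : ∃ x' : B.obj (op ⦋jj.len⦌), x' ∉ M.T (op ⦋jj.len⦌) := by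
      have hj : (⦋jj.len⦌ : SimplexCategory) = jj := SimplexCategory.mk_len jj
      rw [hj]
      exact ⟨x, hxx⟩
    exact (Nat.find_min hex hlen) hne
  -- conclude
  have htot : ∀ (j) (w : (B ⊗ Δ[n]).obj j), w ∈ M.P.S j :=
    fun j w => (M.hS j w).2 (Or.inl (hTtop j w.1))
  refine ⟨{ app := fun j => TypeCat.ofHom fun w => M.P.g j w (htot j w)
            naturality := by
              intro j j' ψ
              ext w
              exact M.P.hnat' ψ w (htot j w) (htot j' _) rfl }, ?_, ?_, ?_⟩
  · ext j x
    show M.P.g j (x.1, x.2.1) (htot j _) = u.app j x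
    exact hMu j (x.1, x.2.1) x.2.2 _
  · ext j x
    exact hMa j x.1 x.2 (htot j _)
  · ext j w
    exact M.P.hcomp j w (htot j w)

end CoreGen

section FinalGlue

open MonoidalClosed

variable [MonoidalClosed SSet.{u}]

/-- The matching map, for an arbitrary closed structure. -/
noncomputable def matchingMapG {A B X Y : SSet.{u}} (i : A ⟶ B) (p : X ⟶ Y) :
    (ihom B).obj X ⟶ pullback ((ihom A).map p) ((MonoidalClosed.pre i).app Y) :=
  pullback.lift ((MonoidalClosed.pre i).app X) ((ihom B).map p)
    ((MonoidalClosed.pre i).naturality p).symm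

/-- Uncurrying intertwines `pre`. -/
lemma uncurry_comp_pre {A B Z W : SSet.{u}} (i : A ⟶ B) (g : Z ⟶ (ihom B).obj W) :
    MonoidalClosed.uncurry (g ≫ (MonoidalClosed.pre i).app W) =
      (i ▷ Z) ≫ MonoidalClosed.uncurry g := by
  rw [MonoidalClosed.uncurry_natural_left, MonoidalClosed.uncurry_pre, ← Category.assoc,
    whisker_exchange, Category.assoc, ← MonoidalClosed.uncurry_eq]

/-- Part 1 of Statement 6. -/
lemma part1 {A B X Y : SSet.{u}} (i : A ⟶ B) (hi : Mono i) (p : X ⟶ Y)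
    (hp : InnerFibration p) : InnerFibration (matchingMapG i p) := by
  intro n' k' h0 hl
  have hinj : ∀ j, Function.Injective (i.app j) := by
    intro j
    rw [← CategoryTheory.mono_iff_injective]
    exact (NatTrans.mono_iff_mono_app i).1 hi j
  constructor
  intro f' g' sq
  have e1 : f' ≫ (MonoidalClosed.pre i).app X =
      Λ[n', k'].ι ≫ (g' ≫ (pullback.fst _ _)) := by
    rw [show (MonoidalClosed.pre i).app X = matchingMapG i p ≫ (pullback.fst _ _) by
      rw [matchingMapG, pullback.lift_fst], ← Category.assoc, sq.w, Category.assoc]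
  have e2 : f' ≫ (ihom B).map p =
      Λ[n', k'].ι ≫ (g' ≫ (pullback.snd _ _)) := by
    rw [show (ihom B).map p = matchingMapG i p ≫ (pullback.snd _ _) by
      rw [matchingMapG, pullback.lift_snd], ← Category.assoc, sq.w, Category.assoc]
  set u' : B ⊗ Λ[n', k'] ⟶ X := MonoidalClosed.uncurry f' with hu'def
  set a' : A ⊗ Δ[n'] ⟶ X := MonoidalClosed.uncurry (g' ≫ (pullback.fst _ _)) with ha'def
  set v' : B ⊗ Δ[n'] ⟶ Y := MonoidalClosed.uncurry (g' ≫ (pullback.snd _ _)) with hv'def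
  have h1 : (i ▷ Λ[n', k']) ≫ u' = (A ◁ Λ[n', k'].ι) ≫ a' := by
    rw [hu'def, ← uncurry_comp_pre, e1, ha'def, MonoidalClosed.uncurry_natural_left]
  have h2 : u' ≫ p = (B ◁ Λ[n', k'].ι) ≫ v' := by
    rw [hu'def, ← MonoidalClosed.uncurry_natural_right, e2, hv'def,
      MonoidalClosed.uncurry_natural_left]
  have h3 : a' ≫ p = (i ▷ Δ[n']) ≫ v' := by
    rw [ha'def, ← MonoidalClosed.uncurry_natural_right, Category.assoc,
      pullback.condition, ← Category.assoc, hv'def, ← uncurry_comp_pre, Category.assoc]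
  obtain ⟨L, c1, c2, c3⟩ := coreGen h0 hl i hinj hp u' a' v' h1 h2 h3
  refine ⟨⟨⟨MonoidalClosed.curry L, ?_, ?_⟩⟩⟩
  · apply MonoidalClosed.uncurry_injective
    rw [MonoidalClosed.uncurry_natural_left, MonoidalClosed.uncurry_curry]
    exact c1
  · apply pullback.hom_ext
    · rw [Category.assoc, show matchingMapG i p ≫ (pullback.fst _ _) = (MonoidalClosed.pre i).app X by
        rw [matchingMapG, pullback.lift_fst]]
      apply MonoidalClosed.uncurry_injective
      rw [uncurry_comp_pre, MonoidalClosed.uncurry_curry]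
      exact c2
    · rw [Category.assoc, show matchingMapG i p ≫ (pullback.snd _ _) = (ihom B).map p by
        rw [matchingMapG, pullback.lift_snd]]
      apply MonoidalClosed.uncurry_injective
      rw [MonoidalClosed.uncurry_natural_right, MonoidalClosed.uncurry_curry]
      exact c3

/-- The empty simplicial set. -/
def emptyS : SSet.{u} where
  obj _ := PEmpty
  map _ := TypeCat.ofHom fun x => x.elim

/-- The inclusion of the empty simplicial set. -/
def emptyTo (A : SSet.{u}) : emptyS ⟶ A where
  app _ := TypeCat.ofHom fun x => x.elim
  naturality _ _ _ := by ext x; exact x.elim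

/-- The unique map out of a tensor with the empty simplicial set. -/
def emptyTensorTo (Z W : SSet.{u}) : emptyS ⊗ Z ⟶ W where
  app := fun _ => TypeCat.ofHom fun x => x.1.elim
  naturality := by intro j j' ψ; ext x; exact x.1.elim

lemma emptyS_tensor_ext {Z W : SSet.{u}} (f g : emptyS ⊗ Z ⟶ W) : f = g := by
  ext j x
  exact x.1.elim

lemma hom_ihom_empty_ext {Z W : SSet.{u}} (f g : Z ⟶ (ihom emptyS).obj W) : f = g := by
  apply MonoidalClosed.uncurry_injective
  exact emptyS_tensor_ext _ _

lemma hom_ihom_unit_ext {A Z : SSet.{u}} (f g : Z ⟶ (ihom A).obj (𝟙_ SSet)) : f = g := by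
  apply MonoidalClosed.uncurry_injective
  exact CartesianMonoidalCategory.toUnit_unique _ _

/-- Part 2 of Statement 6. -/
lemma part2 (X : SSet.{u}) (hX : SSet.Quasicategory X) (A : SSet.{u}) :
    SSet.Quasicategory ((ihom A).obj X) := by
  have hmono : Mono (emptyTo A) := by
    rw [NatTrans.mono_iff_mono_app]
    intro j
    rw [CategoryTheory.mono_iff_injective]
    intro x
    exact x.elim
  have hp : InnerFibration (CartesianMonoidalCategory.toUnit X) := by
    intro n' k' h0 hl
    constructor
    intro f g sq
    obtain ⟨σ, hσ⟩ := @SSet.Quasicategory.hornFilling _ hX _ _ h0 hl f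
    exact ⟨⟨⟨σ, hσ.symm, CartesianMonoidalCategory.toUnit_unique _ _⟩⟩⟩
  have hfib := part1 (emptyTo A) hmono (CartesianMonoidalCategory.toUnit X) hp
  constructor
  intro n' k' σ₀ h0 hl
  -- build the lifting square
  set P := pullback ((ihom emptyS).map (CartesianMonoidalCategory.toUnit X))
    ((MonoidalClosed.pre (emptyTo A)).app (𝟙_ SSet)) with hPdef
  set w : Δ[n' + 2] ⟶ P := pullback.lift
    (MonoidalClosed.curry (emptyTensorTo (Δ[n' + 2]) X))
    (MonoidalClosed.curry (CartesianMonoidalCategory.toUnit _))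
    (hom_ihom_empty_ext _ _) with hwdef
  have sq : CommSq σ₀ (Λ[(n' + 2), k'].ι)
      (matchingMapG (emptyTo A) (CartesianMonoidalCategory.toUnit X)) w := by
    constructor
    apply pullback.hom_ext
    · rw [Category.assoc, Category.assoc,
        show matchingMapG (emptyTo A) (CartesianMonoidalCategory.toUnit X) ≫ (pullback.fst _ _) =
          (MonoidalClosed.pre (emptyTo A)).app X by rw [matchingMapG, pullback.lift_fst]]
      exact hom_ihom_empty_ext _ _
    · rw [Category.assoc, Category.assoc,
        show matchingMapG (emptyTo A) (CartesianMonoidalCategory.toUnit X) ≫ (pullback.snd _ _) =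
          (ihom A).map (CartesianMonoidalCategory.toUnit X) by rw [matchingMapG, pullback.lift_snd]]
      exact hom_ihom_unit_ext _ _
  have hlp := hfib (n' + 2) k' h0 hl
  obtain ⟨⟨⟨l, hl1, -⟩⟩⟩ := hlp.sq_hasLift sq
  exact ⟨l, hl1.symm⟩

end FinalGlue

/-- If `A ⟶ B` is a monomorphism of simplicial sets and `X ⟶ Y` is an
inner fibration, then the induced map `X^B ⟶ X^A ×_{Y^A} Y^B` is an inner fibration.
In particular, if `X` is a quasicategory then so is the internal mapping object `X^A`
for every simplicial set `A`. -/
theorem statement6 :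
    (∀ {A B X Y : SSet} (i : A ⟶ B), Mono i → ∀ (p : X ⟶ Y), InnerFibration p →
      InnerFibration (matchingMap i p)) ∧
    (∀ (X : SSet), SSet.Quasicategory X → ∀ (A : SSet),
      SSet.Quasicategory ((ihom A).obj X)) :=
  ⟨fun i hi p hp => part1 i hi p hp, fun X hX A => part2 X hX A⟩

end Paper
end

section
/- Let X be a quasi-category, and let f, g, h be 1-simplices of X with d₁f = a, d₀f = d₁g = b, d₀g = c, d₁h = a, d₀h = c. Then h = g ∘ f holds in the homotopy category π₀𝔠(X) if and only if there exists a 2-simplex σ : Δ² → X with d₀σ = g, d₁σ = h, and d₂σ = f. -/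
open CategoryTheory Simplicial Opposite Limits MonoidalCategory

namespace Paper

/-- The underlying quiver of a simplicial set `X`: objects are the 0-simplices,
and arrows from `a` to `b` are the 1-simplices `f` with `d₁ f = a` and `d₀ f = b`. -/
def HoQuiv (X : SSet) : Type := X _⦋0⦌

instance (X : SSet) : Quiver (HoQuiv X) :=
  ⟨fun a b => {f : X _⦋1⦌ // X.δ 1 f = a ∧ X.δ 0 f = b}⟩

/-- The morphism of the free category on the quiver of `X` given by a single
1-simplex `f` with `d₁ f = a` and `d₀ f = b`. -/
def pathMk (X : SSet) {a b : HoQuiv X} (f : X _⦋1⦌)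
    (h1 : X.δ 1 f = a) (h0 : X.δ 0 f = b) :
    (Paths.of (HoQuiv X)).obj a ⟶ (Paths.of (HoQuiv X)).obj b :=
  Quiver.Hom.toPath (V := HoQuiv X) ⟨f, h1, h0⟩

/-- The relations defining the homotopy category `π₀𝔠(X)`: for each 0-simplex `a`
the degenerate 1-simplex `s₀ a` is identified with the identity of `a`, and for each
2-simplex `σ` the composite `d₀σ ∘ d₂σ` is identified with `d₁σ`. -/
inductive HoRel (X : SSet) : HomRel (Paths (HoQuiv X)) where
  | degen (a : HoQuiv X) (h1 : X.δ 1 (X.σ 0 a) = a) (h0 : X.δ 0 (X.σ 0 a) = a) :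
      HoRel X (pathMk X (X.σ 0 a) h1 h0) (𝟙 ((Paths.of (HoQuiv X)).obj a))
  /-- The relation `d₀σ ∘ d₂σ = d₁σ` for a 2-simplex `σ`. -/
  | comp (σ : X _⦋2⦌) (a b c : HoQuiv X)
      (hf1 : X.δ 1 (X.δ 2 σ) = a) (hf0 : X.δ 0 (X.δ 2 σ) = b)
      (hg1 : X.δ 1 (X.δ 0 σ) = b) (hg0 : X.δ 0 (X.δ 0 σ) = c)
      (hh1 : X.δ 1 (X.δ 1 σ) = a) (hh0 : X.δ 0 (X.δ 1 σ) = c) :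
      HoRel X (pathMk X (X.δ 2 σ) hf1 hf0 ≫ pathMk X (X.δ 0 σ) hg1 hg0)
        (pathMk X (X.δ 1 σ) hh1 hh0)

/-- The homotopy category `π₀𝔠(X)` of a simplicial set `X`: the category with objects
the 0-simplices of `X`, generated by the 1-simplices subject to the relations
`s₀ a = id_a` and `d₁σ = d₀σ ∘ d₂σ`.  (This is the value at `X` of the left adjoint
of the classical nerve functor.) -/
def HoCat (X : SSet) : Type := CategoryTheory.Quotient (HoRel X)

instance (X : SSet) : Category (HoCat X) :=
  inferInstanceAs (Category (CategoryTheory.Quotient (HoRel X)))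

/-- The object of `π₀𝔠(X)` corresponding to a 0-simplex. -/
def hoObj (X : SSet) (a : X _⦋0⦌) : HoCat X :=
  (CategoryTheory.Quotient.functor (HoRel X)).obj ((Paths.of (HoQuiv X)).obj a)

/-- The morphism of `π₀𝔠(X)` represented by a 1-simplex `f` with `d₁ f = a` and
`d₀ f = b`. -/
def hoMk (X : SSet) {a b : X _⦋0⦌} (f : X _⦋1⦌)
    (h1 : X.δ 1 f = a) (h0 : X.δ 0 f = b) :
    hoObj X a ⟶ hoObj X b :=
  (CategoryTheory.Quotient.functor (HoRel X)).map (pathMk X f h1 h0)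

end Paper

namespace Paper

namespace St10

open SimplexCategory

variable {X : SSet.{0}}


/-- Compatibility of a family of prospective faces of an `(n+2)`-simplex. -/
def Compat {n : ℕ} (i : Fin (n+3)) (F : ∀ j : Fin (n+3), j ≠ i → X _⦋n+1⦌) : Prop :=
  ∀ (j k : Fin (n+2)) (_ : j ≤ k) (hj : j.castSucc ≠ i) (hk : k.succ ≠ i),
    X.δ j (F k.succ hk) = X.δ k (F j.castSucc hj)

lemma exists_missing {n : ℕ} (i : Fin (n+3)) {m : SimplexCategoryᵒᵖ}
    (α : (Λ[n+2, i] : SSet).obj m) :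
    ∃ j, ¬ j = i ∧ ∀ k, (SSet.stdSimplex.objEquiv α.1).toOrderHom k ≠ j := by
  obtain ⟨f, hf⟩ := α
  obtain ⟨f', rfl⟩ := SSet.stdSimplex.objEquiv.symm.surjective f
  rw [SSet.mem_horn_iff] at hf
  simp [← Set.univ_subset_iff, Set.subset_def, SSet.stdSimplex.asOrderHom, not_or] at hf ⊢
  exact hf

lemma factor_δ_comp {l l' n : ℕ} (g : (⦋l'⦌ : SimplexCategory) ⟶ ⦋l⦌)
    (f : (⦋l⦌ : SimplexCategory) ⟶ ⦋n+1⦌) (j : Fin (n+2))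
    (hjf : ∀ x, f.toOrderHom x ≠ j) :
    factor_δ (g ≫ f) j = g ≫ factor_δ f j := by
  have h1 : factor_δ (g ≫ f) j ≫ δ j = g ≫ f :=
    factor_δ_spec (g ≫ f) j (fun x => hjf (g.toOrderHom x))
  have h2 : (g ≫ factor_δ f j) ≫ δ j = g ≫ f := by
    rw [Category.assoc, factor_δ_spec f j hjf]
  exact (cancel_mono (δ j)).mp (h1.trans h2.symm)

lemma map_factor_eq_lt {n : ℕ} {i : Fin (n+3)} {F : ∀ j : Fin (n+3), j ≠ i → X _⦋n+1⦌}
    (hF : Compat i F) {l : ℕ} (f : (⦋l⦌ : SimplexCategory) ⟶ ⦋n+2⦌)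
    {j k : Fin (n+3)} (hj : j ≠ i) (hk : k ≠ i) (hjk : j < k)
    (hjf : ∀ x, f.toOrderHom x ≠ j) (hkf : ∀ x, f.toOrderHom x ≠ k) :
    X.map (factor_δ f j).op (F j hj) = X.map (factor_δ f k).op (F k hk) := by
  obtain ⟨k₁, rfl⟩ := Fin.eq_succ_of_ne_zero (Fin.pos_iff_ne_zero.mp (lt_of_le_of_lt j.zero_le hjk))
  have hjlast : j ≠ Fin.last (n+2) := Fin.ne_last_of_lt hjk
  obtain ⟨j₁, rfl⟩ : ∃ j₁ : Fin (n+2), j₁.castSucc = j := ⟨j.castPred hjlast, Fin.castSucc_castPred _ _⟩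
  have hj₁k₁ : j₁ ≤ k₁ := Fin.castSucc_lt_succ_iff.mp hjk
  have hβ : factor_δ f k₁.succ ≫ δ k₁.succ = f := factor_δ_spec f k₁.succ hkf
  have hjβ : ∀ x, (factor_δ f k₁.succ).toOrderHom x ≠ j₁ := by
    intro x h
    apply hjf x
    have e : f.toOrderHom x = k₁.succ.succAbove ((factor_δ f k₁.succ).toOrderHom x) := by
      conv_lhs => rw [← hβ]
      rfl
    rw [e, h, Fin.succAbove_of_castSucc_lt _ _ hjk]
  have hγ : factor_δ (factor_δ f k₁.succ) j₁ ≫ δ j₁ = factor_δ f k₁.succ :=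
    factor_δ_spec (factor_δ f k₁.succ) j₁ hjβ
  have key : factor_δ f j₁.castSucc = factor_δ (factor_δ f k₁.succ) j₁ ≫ δ k₁ := by
    have h1 : (factor_δ (factor_δ f k₁.succ) j₁ ≫ δ k₁) ≫ δ j₁.castSucc = f := by
      rw [Category.assoc, ← SimplexCategory.δ_comp_δ hj₁k₁, ← Category.assoc, hγ, hβ]
    have h2 := factor_δ_spec f j₁.castSucc hjf
    exact (cancel_mono (δ j₁.castSucc)).mp (h2.trans h1.symm)
  have lhs : X.map (factor_δ f j₁.castSucc).op (F j₁.castSucc hj)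
      = X.map (factor_δ (factor_δ f k₁.succ) j₁).op (X.δ k₁ (F j₁.castSucc hj)) := by
    rw [key, op_comp, X.map_comp]; rfl
  have rhs : X.map (factor_δ f k₁.succ).op (F k₁.succ hk)
      = X.map (factor_δ (factor_δ f k₁.succ) j₁).op (X.δ j₁ (F k₁.succ hk)) := by
    conv_lhs => rw [← hγ]
    rw [op_comp, X.map_comp]; rfl
  rw [lhs, rhs, hF j₁ k₁ hj₁k₁ hj hk]

lemma map_factor_eq {n : ℕ} {i : Fin (n+3)} {F : ∀ j : Fin (n+3), j ≠ i → X _⦋n+1⦌}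
    (hF : Compat i F) {l : ℕ} (f : (⦋l⦌ : SimplexCategory) ⟶ ⦋n+2⦌)
    {j k : Fin (n+3)} (hj : j ≠ i) (hk : k ≠ i)
    (hjf : ∀ x, f.toOrderHom x ≠ j) (hkf : ∀ x, f.toOrderHom x ≠ k) :
    X.map (factor_δ f j).op (F j hj) = X.map (factor_δ f k).op (F k hk) := by
  rcases lt_trichotomy j k with h | h | h
  · exact map_factor_eq_lt hF f hj hk h hjf hkf
  · subst h; rfl
  · exact (map_factor_eq_lt hF f hk hj h hkf hjf).symm



section
variable {n : ℕ} (i : Fin (n+3)) (F : ∀ j : Fin (n+3), j ≠ i → X _⦋n+1⦌)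


/-- The value of the horn map on an `l`-simplex of the horn. -/
noncomputable def hornApp (l : ℕ) (α : (Λ[n+2, i] : SSet).obj (op ⦋l⦌)) : X.obj (op ⦋l⦌) :=
  X.map (factor_δ (SSet.stdSimplex.objEquiv α.1) (exists_missing i α).choose).op
    (F _ (exists_missing i α).choose_spec.1)

lemma hornApp_eq (hF : Compat i F) (l : ℕ) (α : (Λ[n+2, i] : SSet).obj (op ⦋l⦌))
    {j : Fin (n+3)} (hj : j ≠ i)
    (hjf : ∀ x, (SSet.stdSimplex.objEquiv α.1).toOrderHom x ≠ j) :
    hornApp i F l α = X.map (factor_δ (SSet.stdSimplex.objEquiv α.1) j).op (F j hj) :=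
  map_factor_eq hF _ (exists_missing i α).choose_spec.1 hj
    (exists_missing i α).choose_spec.2 hjf

lemma hornApp_natural (hF : Compat i F) {l₁ l₂ : ℕ}
    (g : (⦋l₂⦌ : SimplexCategory) ⟶ ⦋l₁⦌) (α : (Λ[n+2, i] : SSet).obj (op ⦋l₁⦌)) :
    hornApp i F l₂ ((Λ[n+2, i] : SSet).map g.op α) = X.map g.op (hornApp i F l₁ α) := by
  obtain ⟨j, hj, hjf⟩ := exists_missing i α
  have hmap : (SSet.stdSimplex.objEquiv ((Λ[n+2, i] : SSet).map g.op α).1)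
      = g ≫ (SSet.stdSimplex.objEquiv α.1) := rfl
  have hjf₂ : ∀ x, (SSet.stdSimplex.objEquiv ((Λ[n+2, i] : SSet).map g.op α).1).toOrderHom x ≠ j := by
    intro x
    rw [hmap]
    exact hjf _
  rw [hornApp_eq i F hF l₂ _ hj hjf₂, hornApp_eq i F hF l₁ α hj hjf]
  rw [hmap, factor_δ_comp g _ j hjf, op_comp, X.map_comp]
  rfl

/-- The horn map determined by compatible faces. -/
noncomputable def hornHom (hF : Compat i F) : (Λ[n+2, i] : SSet) ⟶ X where
  app m := TypeCat.ofHom fun α => hornApp i F m.unop.len α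
  naturality := by
    intro m₁ m₂ g
    ext α
    exact hornApp_natural i F hF (l₁ := m₁.unop.len) (l₂ := m₂.unop.len) g.unop α

lemma hornHom_face (hF : Compat i F) (j : Fin (n+3)) (hj : j ≠ i) :
    (hornHom i F hF).app (op ⦋n+1⦌) (SSet.horn.face.{0} i j hj) = F j hj := by
  have hface : (SSet.stdSimplex.objEquiv (SSet.horn.face.{0} i j hj).1) = δ j := by
    rfl
  have hmiss : ∀ x, (SSet.stdSimplex.objEquiv (SSet.horn.face.{0} i j hj).1).toOrderHom x ≠ j := by
    intro x
    rw [hface]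
    exact Fin.succAbove_ne j x
  show hornApp i F (n+1) (SSet.horn.face.{0} i j hj) = F j hj
  rw [hornApp_eq i F hF _ _ hj hmiss, hface]
  have : factor_δ (δ j) j = 𝟙 _ := by
    apply (cancel_mono (δ j)).mp
    rw [factor_δ_spec (δ j) j (fun x => Fin.succAbove_ne j x), Category.id_comp]
  rw [this]
  simp

lemma filler [SSet.Quasicategory X] (h0 : 0 < i) (hn : i < Fin.last (n+2)) (hF : Compat i F) :
    ∃ s : X _⦋n+2⦌, ∀ (j : Fin (n+3)) (hj : j ≠ i), X.δ j s = F j hj := by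
  obtain ⟨σ, hσ⟩ := SSet.Quasicategory.hornFilling h0 hn (hornHom i F hF)
  refine ⟨σ.app (op ⦋n+2⦌) ((SSet.stdSimplex.objEquiv.symm (𝟙 ⦋n+2⦌) : Δ[n+2] _⦋n+2⦌)), fun j hj => ?_⟩
  have hnat : X.δ j (σ.app (op ⦋n+2⦌) ((SSet.stdSimplex.objEquiv.symm (𝟙 ⦋n+2⦌) : Δ[n+2] _⦋n+2⦌)))
      = σ.app (op ⦋n+1⦌) (Δ[n+2].map (δ j).op ((SSet.stdSimplex.objEquiv.symm (𝟙 ⦋n+2⦌) : Δ[n+2] _⦋n+2⦌))) :=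
    (ConcreteCategory.congr_hom (σ.naturality (δ j).op) _).symm
  have hid : Δ[n+2].map (δ j).op ((SSet.stdSimplex.objEquiv.symm (𝟙 ⦋n+2⦌) : Δ[n+2] _⦋n+2⦌))
      = (SSet.horn.face.{0} i j hj).1 := by
    rfl
  rw [hnat, hid]
  have : σ.app (op ⦋n+1⦌) (SSet.horn.face.{0} i j hj).1
      = ((Λ[n+2, i]).ι ≫ σ).app (op ⦋n+1⦌) (SSet.horn.face.{0} i j hj) := rfl
  rw [this, ← hσ]
  exact hornHom_face i F hF j hj

end

/-! ### Simplicial identity helpers -/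

section Identities

lemma dd {m : ℕ} {i j : Fin (m+2)} (H : i ≤ j) (s : X _⦋m+2⦌) :
    X.δ i (X.δ j.succ s) = X.δ j (X.δ i.castSucc s) :=
  ConcreteCategory.congr_hom (X.δ_comp_δ H) s

lemma d0d1 (s : X _⦋2⦌) : X.δ 0 (X.δ 1 s) = X.δ 0 (X.δ 0 s) := by
  simpa using dd (i := 0) (j := 0) le_rfl s

lemma d1d2 (s : X _⦋2⦌) : X.δ 1 (X.δ 2 s) = X.δ 1 (X.δ 1 s) := by
  simpa using dd (i := 1) (j := 1) le_rfl s

lemma d0d2 (s : X _⦋2⦌) : X.δ 0 (X.δ 2 s) = X.δ 1 (X.δ 0 s) := by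
  simpa using dd (i := 0) (j := 1) (by decide) s

lemma d0d1' (s : X _⦋3⦌) : X.δ 0 (X.δ 1 s) = X.δ 0 (X.δ 0 s) := by
  simpa using dd (i := 0) (j := 0) le_rfl s

lemma d1d2' (s : X _⦋3⦌) : X.δ 1 (X.δ 2 s) = X.δ 1 (X.δ 1 s) := by
  simpa using dd (i := 1) (j := 1) le_rfl s

lemma d0d2' (s : X _⦋3⦌) : X.δ 0 (X.δ 2 s) = X.δ 1 (X.δ 0 s) := by
  simpa using dd (i := 0) (j := 1) (by decide) s

lemma d1d3' (s : X _⦋3⦌) : X.δ 1 (X.δ 3 s) = X.δ 2 (X.δ 1 s) := by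
  have := dd (i := 1) (j := 2) (by decide) s
  simpa [show ((2 : Fin 3).succ = 3) from rfl, show (Fin.castSucc (1 : Fin 3) = 1) from rfl] using this

lemma d2d3' (s : X _⦋3⦌) : X.δ 2 (X.δ 3 s) = X.δ 2 (X.δ 2 s) := by
  have := dd (i := 2) (j := 2) (le_rfl) s
  simpa [show ((2 : Fin 3).succ = 3) from rfl, show (Fin.castSucc (2 : Fin 3) = 2) from rfl] using this

lemma d0s0 {m : ℕ} (x : X _⦋m⦌) : X.δ 0 (X.σ 0 x) = x := by
  simpa using ConcreteCategory.congr_hom (X.δ_comp_σ_self (i := 0)) x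

lemma d1s0 {m : ℕ} (x : X _⦋m⦌) : X.δ 1 (X.σ 0 x) = x := by
  simpa using ConcreteCategory.congr_hom (X.δ_comp_σ_succ (i := 0)) x

lemma d2s0 (x : X _⦋1⦌) : X.δ 2 (X.σ 0 x) = X.σ 0 (X.δ 1 x) := by
  have := ConcreteCategory.congr_hom (X.δ_comp_σ_of_gt (i := 1) (j := 0) (by decide)) x
  simpa [show ((1 : Fin 2).succ = 2) from rfl, show (Fin.castSucc (0 : Fin 1) = 0) from rfl] using this

lemma d0s1 (x : X _⦋1⦌) : X.δ 0 (X.σ 1 x) = X.σ 0 (X.δ 0 x) := by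
  have := ConcreteCategory.congr_hom (X.δ_comp_σ_of_le (i := 0) (j := 0) (by decide)) x
  simpa using this

lemma d1s1 (x : X _⦋1⦌) : X.δ 1 (X.σ 1 x) = x := by
  have := ConcreteCategory.congr_hom (X.δ_comp_σ_self (i := 1)) x
  simpa [show (Fin.castSucc (1 : Fin 2) = 1) from rfl] using this

lemma d2s1 (x : X _⦋1⦌) : X.δ 2 (X.σ 1 x) = x := by
  have := ConcreteCategory.congr_hom (X.δ_comp_σ_succ (i := 1)) x
  simpa [show ((1 : Fin 2).succ = 2) from rfl] using this

end Identities

/-! ### Concrete horn fillers -/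

section Fillers
variable [SSet.Quasicategory X]

/-- Filler for the inner horn `Λ[2,1]`. -/
lemma fill2 (p q : X _⦋1⦌) (h : X.δ 0 p = X.δ 1 q) :
    ∃ τ : X _⦋2⦌, X.δ 2 τ = p ∧ X.δ 0 τ = q := by
  have := filler (n := 0) (X := X) (i := 1)
    (F := fun j _ => if j = 0 then q else p) (by decide) (by decide) ?_
  · obtain ⟨s, hs⟩ := this
    refine ⟨s, ?_, ?_⟩
    · rw [hs 2 (by decide)]; simp
    · rw [hs 0 (by decide)]; simp
  · intro j k hjk hj hk
    fin_cases j <;> fin_cases k <;> simp_all <;>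
      first
        | rfl
        | (exact absurd rfl hj)
        | (exact absurd rfl hk)
        | (simpa using h)

/-- Filler for the inner horn `Λ[3,1]`. -/
lemma fill31 (F0 F2 F3 : X _⦋2⦌)
    (h02 : X.δ 0 F2 = X.δ 1 F0) (h03 : X.δ 0 F3 = X.δ 2 F0)
    (h23 : X.δ 2 F3 = X.δ 2 F2) :
    ∃ s : X _⦋3⦌, X.δ 0 s = F0 ∧ X.δ 2 s = F2 ∧ X.δ 3 s = F3 := by
  have := filler (n := 1) (X := X) (i := 1)
    (F := fun j _ => if j = 0 then F0 else if j = 2 then F2 else F3)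
    (by decide) (by decide) ?_
  · obtain ⟨s, hs⟩ := this
    refine ⟨s, ?_, ?_, ?_⟩
    · rw [hs 0 (by decide)]; simp
    · rw [hs 2 (by decide)]; simp
    · rw [hs 3 (by decide)]; simp
  · intro j k hjk hj hk
    fin_cases j <;> fin_cases k <;> simp_all <;>
      first
        | rfl
        | (exact absurd rfl hj)
        | (exact absurd rfl hk)
        | (simpa using h02)
        | (simpa using h03)
        | (simpa using h23)

/-- Filler for the inner horn `Λ[3,2]`. -/
lemma fill32 (F0 F1 F3 : X _⦋2⦌)
    (h01 : X.δ 0 F1 = X.δ 0 F0) (h03 : X.δ 0 F3 = X.δ 2 F0)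
    (h13 : X.δ 1 F3 = X.δ 2 F1) :
    ∃ s : X _⦋3⦌, X.δ 0 s = F0 ∧ X.δ 1 s = F1 ∧ X.δ 3 s = F3 := by
  have := filler (n := 1) (X := X) (i := 2)
    (F := fun j _ => if j = 0 then F0 else if j = 1 then F1 else F3)
    (by decide) (by decide) ?_
  · obtain ⟨s, hs⟩ := this
    refine ⟨s, ?_, ?_, ?_⟩
    · rw [hs 0 (by decide)]; simp
    · rw [hs 1 (by decide)]; simp
    · rw [hs 3 (by decide)]; simp
  · intro j k hjk hj hk
    fin_cases j <;> fin_cases k <;> simp_all <;>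
      first
        | rfl
        | (exact absurd rfl hj)
        | (exact absurd rfl hk)
        | (simpa using h01)
        | (simpa using h03)
        | (simpa using h13)

end Fillers

/-! ### The homotopy relation on 1-simplices -/

/-- Two 1-simplices are homotopic if there is a 2-simplex with boundary
`(s₀(d₀ p), q, p)`. -/
def Hmt (X : SSet.{0}) (p q : X _⦋1⦌) : Prop :=
  ∃ θ : X _⦋2⦌, X.δ 2 θ = p ∧ X.δ 1 θ = q ∧ X.δ 0 θ = X.σ 0 (X.δ 0 p)

lemma Hmt.d1 {p q : X _⦋1⦌} (h : Hmt X p q) : X.δ 1 q = X.δ 1 p := by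
  obtain ⟨θ, h2, h1, h0⟩ := h
  rw [← h1, ← d1d2 θ, h2]

lemma Hmt.d0 {p q : X _⦋1⦌} (h : Hmt X p q) : X.δ 0 q = X.δ 0 p := by
  obtain ⟨θ, h2, h1, h0⟩ := h
  rw [← h1, d0d1 θ, h0, d0s0]

lemma Hmt.refl (p : X _⦋1⦌) : Hmt X p p :=
  ⟨X.σ 1 p, d2s1 p, d1s1 p, d0s1 p⟩

section
variable [SSet.Quasicategory X]

lemma Hmt.left_cancel {p q r : X _⦋1⦌} (hq : Hmt X p q) (hr : Hmt X p r) :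
    Hmt X q r := by
  obtain ⟨θ₁, h12, h11, h10⟩ := hq
  obtain ⟨θ₂, h22, h21, h20⟩ := hr
  obtain ⟨s, hs0, hs2, hs3⟩ := fill31 (X.σ 0 (X.σ 0 (X.δ 0 p))) θ₂ θ₁
    (by rw [h20, d1s0]) (by rw [h10, d2s0, d1s0]) (by rw [h12, h22])
  have hq0 : X.δ 0 q = X.δ 0 p := Hmt.d0 ⟨θ₁, h12, h11, h10⟩
  refine ⟨X.δ 1 s, ?_, ?_, ?_⟩
  · rw [← d1d3' s, hs3, h11]
  · rw [← d1d2' s, hs2, h21]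
  · rw [d0d1' s, hs0, d0s0, hq0]

lemma Hmt.symm {p q : X _⦋1⦌} (h : Hmt X p q) : Hmt X q p :=
  Hmt.left_cancel h (Hmt.refl p)

lemma Hmt.trans {p q r : X _⦋1⦌} (h1 : Hmt X p q) (h2 : Hmt X q r) : Hmt X p r :=
  Hmt.left_cancel (Hmt.symm h1) h2

/-- Any two fillers of the same `Λ[2,1]`-horn have homotopic long edges. -/
lemma fillers_congr {σ₁ σ₂ : X _⦋2⦌} (h2 : X.δ 2 σ₁ = X.δ 2 σ₂)
    (h0 : X.δ 0 σ₁ = X.δ 0 σ₂) : Hmt X (X.δ 1 σ₁) (X.δ 1 σ₂) := by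
  obtain ⟨s, hs0, hs2, hs3⟩ := fill31 (X.σ 1 (X.δ 0 σ₁)) σ₂ σ₁
    (by rw [← h0, d1s1]) (by rw [d2s1]) (by rw [h2])
  refine ⟨X.δ 1 s, ?_, ?_, ?_⟩
  · rw [← d1d3' s, hs3]
  · rw [← d1d2' s, hs2]
  · rw [d0d1' s, hs0, d0s1, d0d1]

/-- A `Λ[2,1]`-horn filler may be modified along a homotopy of its second face. -/
lemma right_congr {q' : X _⦋1⦌} (σ : X _⦋2⦌) (h : Hmt X (X.δ 0 σ) q') :
    ∃ σ' : X _⦋2⦌, X.δ 2 σ' = X.δ 2 σ ∧ X.δ 0 σ' = q' ∧ X.δ 1 σ' = X.δ 1 σ := by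
  obtain ⟨θ, h2, h1, h0⟩ := h
  obtain ⟨s, hs0, hs1, hs3⟩ := fill32 θ (X.σ 1 (X.δ 1 σ)) σ
    (by rw [h0, d0s1, d0d1]) (by rw [h2]) (by rw [d2s1])
  refine ⟨X.δ 2 s, ?_, ?_, ?_⟩
  · rw [← d2d3' s, hs3]
  · rw [d0d2' s, hs0, h1]
  · rw [d1d2' s, hs1, d1s1]

/-- A `Λ[2,1]`-horn filler may be modified along a homotopy of its first face. -/
lemma left_congr {p' : X _⦋1⦌} (σ : X _⦋2⦌) (h : Hmt X p' (X.δ 2 σ)) :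
    ∃ σ' : X _⦋2⦌, X.δ 2 σ' = p' ∧ X.δ 0 σ' = X.δ 0 σ ∧ X.δ 1 σ' = X.δ 1 σ := by
  obtain ⟨θ, h2, h1, h0⟩ := h
  obtain ⟨s, hs0, hs1, hs3⟩ := fill32 (X.σ 0 (X.δ 0 σ)) σ θ
    (by rw [d0s0]) (by rw [h0, d2s0]; congr 1; rw [← Hmt.d0 ⟨θ, h2, h1, h0⟩, d0d2])
    (by rw [h1])
  refine ⟨X.δ 2 s, ?_, ?_, ?_⟩
  · rw [← d2d3' s, hs3, h2]
  · rw [d0d2' s, hs0, d1s0]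
  · rw [d1d2' s, hs1]
end


section Cat
variable [SSet.Quasicategory X]

/-- The edges between two vertices. -/
abbrev Edge (a b : X _⦋0⦌) := {f : X _⦋1⦌ // X.δ 1 f = a ∧ X.δ 0 f = b}

/-- Homotopy as a setoid on edges. -/
def edgeSetoid (a b : X _⦋0⦌) : Setoid (Edge a b) where
  r p q := Hmt X p.1 q.1
  iseqv := ⟨fun p => Hmt.refl p.1, Hmt.symm, Hmt.trans⟩

/-- The chosen composite 2-simplex of two composable edges. -/
noncomputable def compTri {a b c : X _⦋0⦌} (p : Edge a b) (q : Edge b c) : X _⦋2⦌ :=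
  (fill2 p.1 q.1 (by rw [p.2.2, q.2.1])).choose

lemma compTri_d2 {a b c : X _⦋0⦌} (p : Edge a b) (q : Edge b c) :
    X.δ 2 (compTri p q) = p.1 :=
  (fill2 p.1 q.1 (by rw [p.2.2, q.2.1])).choose_spec.1

lemma compTri_d0 {a b c : X _⦋0⦌} (p : Edge a b) (q : Edge b c) :
    X.δ 0 (compTri p q) = q.1 :=
  (fill2 p.1 q.1 (by rw [p.2.2, q.2.1])).choose_spec.2

/-- The chosen composite of two composable edges. -/
noncomputable def compEdge {a b c : X _⦋0⦌} (p : Edge a b) (q : Edge b c) : Edge a c :=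
  ⟨X.δ 1 (compTri p q), by
    constructor
    · rw [← d1d2 (compTri p q), compTri_d2, p.2.1]
    · rw [d0d1 (compTri p q), compTri_d0, q.2.2]⟩

/-- Any 2-simplex witnesses the homotopy class of the composite of its outer faces. -/
lemma compEdge_eq_of_tri {a b c : X _⦋0⦌} (p : Edge a b) (q : Edge b c) (σ : X _⦋2⦌)
    (hσ2 : X.δ 2 σ = p.1) (hσ0 : X.δ 0 σ = q.1) :
    Hmt X (compEdge p q).1 (X.δ 1 σ) :=
  fillers_congr (by rw [compTri_d2, hσ2]) (by rw [compTri_d0, hσ0])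

lemma compEdge_congr {a b c : X _⦋0⦌} (p p' : Edge a b) (q q' : Edge b c)
    (hp : Hmt X p.1 p'.1) (hq : Hmt X q.1 q'.1) :
    Hmt X (compEdge p q).1 (compEdge p' q').1 := by
  obtain ⟨σ', h2, h0, h1⟩ := right_congr (compTri p q) (by rw [compTri_d0]; exact hq)
  obtain ⟨σ'', k2, k0, k1⟩ := left_congr σ' (by rw [h2, compTri_d2]; exact Hmt.symm hp)
  have : Hmt X (X.δ 1 (compTri p' q')) (X.δ 1 σ'') :=
    fillers_congr (by rw [compTri_d2, k2]) (by rw [compTri_d0, k0, h0])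
  rw [k1, h1] at this
  exact Hmt.symm this

/-- The homotopy category of the quasicategory `X`, built from homotopy classes
of 1-simplices. -/
abbrev HCat (_X : SSet.{0}) := _X _⦋0⦌

variable (X) in
/-- `HCat` is a category. -/
noncomputable instance : CategoryTheory.Category (HCat X) where
  Hom a b := Quotient (edgeSetoid (X := X) a b)
  id a := Quotient.mk _ ⟨X.σ 0 a, d1s0 a, d0s0 a⟩
  comp := Quotient.map₂ compEdge fun p p' hp q q' hq => compEdge_congr p p' q q' hp hq
  id_comp := by
    rintro a b ⟨p⟩
    refine Quotient.sound ?_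
    have h := compEdge_eq_of_tri ⟨X.σ 0 a, d1s0 a, d0s0 a⟩ p (X.σ 0 p.1)
      (by rw [d2s0, p.2.1]) (d0s0 p.1)
    rw [d1s0 p.1] at h
    exact h
  comp_id := by
    rintro a b ⟨p⟩
    refine Quotient.sound ?_
    have h := compEdge_eq_of_tri p ⟨X.σ 0 b, d1s0 b, d0s0 b⟩ (X.σ 1 p.1)
      (d2s1 p.1) (by rw [d0s1, p.2.2])
    rw [d1s1 p.1] at h
    exact h
  assoc := by
    rintro a b c d ⟨p⟩ ⟨q⟩ ⟨r⟩
    refine Quotient.sound ?_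
    obtain ⟨s, hs0, hs2, hs3⟩ := fill31 (compTri q r) (compTri p (compEdge q r)) (compTri p q)
      (by rw [compTri_d0]; rfl)
      (by rw [compTri_d0, compTri_d2])
      (by rw [compTri_d2, compTri_d2])
    have h := compEdge_eq_of_tri (compEdge p q) r (X.δ 1 s)
      (by rw [← d1d3' s, hs3]; rfl)
      (by rw [d0d1' s, hs0, compTri_d0])
    have e : X.δ 1 (X.δ 1 s) = (compEdge p (compEdge q r)).1 := by
      rw [← d1d2' s, hs2]; rfl
    rw [e] at h
    exact h

end Cat

section Functor
variable (X)
variable [SSet.Quasicategory X]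

/-- The prefunctor from the quiver of `X` to `HCat X`. -/
noncomputable def φ : HoQuiv X ⥤q HCat X where
  obj a := a
  map {a b} e := Quotient.mk (edgeSetoid a b) e

/-- The functor from the path category to `HCat X`. -/
noncomputable def Fct : Paths (HoQuiv X) ⥤ HCat X := Paths.lift (φ X)

lemma Fct_map_pathMk {a b : X _⦋0⦌} (f : X _⦋1⦌) (h1 : X.δ 1 f = a) (h0 : X.δ 0 f = b) :
    (Fct X).map (pathMk X f h1 h0) = Quotient.mk (edgeSetoid a b) ⟨f, h1, h0⟩ :=
  Paths.lift_toPath (φ X) _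

lemma Fct_hoRel : ∀ (x y : Paths (HoQuiv X)) (f g : x ⟶ y), HoRel X f g →
    (Fct X).map f = (Fct X).map g := by
  intro x y f' g' hrel
  cases hrel with
  | degen a h1 h0 =>
    exact (Fct_map_pathMk X _ h1 h0).trans
      ((Quotient.sound (Hmt.refl _)).trans ((Fct X).map_id _).symm)
  | comp σ a b c hf1 hf0 hg1 hg0 hh1 hh0 =>
    rw [CategoryTheory.Functor.map_comp]
    refine (congrArg₂ (· ≫ ·) (Fct_map_pathMk X _ hf1 hf0) (Fct_map_pathMk X _ hg1 hg0)).trans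
      (Eq.trans ?_ (Fct_map_pathMk X _ hh1 hh0).symm)
    have h := compEdge_eq_of_tri ⟨X.δ 2 σ, hf1, hf0⟩ ⟨X.δ 0 σ, hg1, hg0⟩ σ rfl rfl
    exact Quotient.sound h

/-- The functor from the homotopy category to `HCat X`. -/
noncomputable def Gct : CategoryTheory.Quotient (HoRel X) ⥤ HCat X :=
  CategoryTheory.Quotient.lift (HoRel X) (Fct X) (Fct_hoRel X)

end Functor

/-- The hard direction of Statement 10. -/
lemma hard {X : SSet.{0}} [SSet.Quasicategory X] (f g h : X _⦋1⦌) (a b c : X _⦋0⦌)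
    (hf1 : X.δ 1 f = a) (hf0 : X.δ 0 f = b) (hg1 : X.δ 1 g = b) (hg0 : X.δ 0 g = c)
    (hh1 : X.δ 1 h = a) (hh0 : X.δ 0 h = c)
    (hyp : hoMk X f hf1 hf0 ≫ hoMk X g hg1 hg0 = hoMk X h hh1 hh0) :
    ∃ σ : X _⦋2⦌, X.δ 0 σ = g ∧ X.δ 1 σ = h ∧ X.δ 2 σ = f := by
  set ef : Edge a b := ⟨f, hf1, hf0⟩
  set eg : Edge b c := ⟨g, hg1, hg0⟩
  have hyp' : (CategoryTheory.Quotient.functor (HoRel X)).map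
        (pathMk X f hf1 hf0 ≫ pathMk X g hg1 hg0)
      = (CategoryTheory.Quotient.functor (HoRel X)).map (pathMk X h hh1 hh0) := by
    rw [CategoryTheory.Functor.map_comp]; exact hyp
  have h1 : (Fct X).map (pathMk X f hf1 hf0 ≫ pathMk X g hg1 hg0)
      = (Fct X).map (pathMk X h hh1 hh0) :=
    congrArg (Gct X).map hyp'
  rw [CategoryTheory.Functor.map_comp, Fct_map_pathMk, Fct_map_pathMk, Fct_map_pathMk] at h1
  have h2 : (Quotient.mk (edgeSetoid a c) (compEdge ef eg))
      = Quotient.mk (edgeSetoid a c) ⟨h, hh1, hh0⟩ := h1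
  have h3 : Hmt X (compEdge ef eg).1 h := Quotient.exact h2
  obtain ⟨θ, ht2, ht1, ht0⟩ := h3
  have e0 : X.δ 0 ((compEdge ef eg).1) = X.δ 0 g := by
    show X.δ 0 (X.δ 1 (compTri ef eg)) = X.δ 0 g
    rw [d0d1, compTri_d0]
  obtain ⟨s, hs0, hs1, hs3⟩ := fill32 (X.σ 1 g) θ (compTri ef eg)
    (by rw [ht0, e0, d0s1])
    (by rw [compTri_d0, d2s1])
    (ht2.symm)
  refine ⟨X.δ 2 s, ?_, ?_, ?_⟩
  · rw [d0d2' s, hs0, d1s1]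
  · rw [d1d2' s, hs1, ht1]
  · rw [← d2d3' s, hs3, compTri_d2]

end St10

/-- Let `X` be a quasicategory and `f`, `g`, `h` 1-simplices of `X`
with `d₁f = a`, `d₀f = d₁g = b`, `d₀g = c`, `d₁h = a`, `d₀h = c`.  Then `h = g ∘ f`
in the homotopy category `π₀𝔠(X)` if and only if there is a 2-simplex `σ` of `X`
with `d₀σ = g`, `d₁σ = h` and `d₂σ = f`. -/
theorem statement10 (X : SSet) [SSet.Quasicategory X] (f g h : X _⦋1⦌) (a b c : X _⦋0⦌)
    (hf1 : X.δ 1 f = a) (hf0 : X.δ 0 f = b) (hg1 : X.δ 1 g = b) (hg0 : X.δ 0 g = c)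
    (hh1 : X.δ 1 h = a) (hh0 : X.δ 0 h = c) :
    hoMk X f hf1 hf0 ≫ hoMk X g hg1 hg0 = hoMk X h hh1 hh0 ↔
      ∃ σ : X _⦋2⦌, X.δ 0 σ = g ∧ X.δ 1 σ = h ∧ X.δ 2 σ = f := by
  constructor
  · exact St10.hard f g h a b c hf1 hf0 hg1 hg0 hh1 hh0
  · rintro ⟨σ, hσ0, hσ1, hσ2⟩
    subst hσ0
    subst hσ1
    subst hσ2
    simp only [hoMk]
    refine ((CategoryTheory.Quotient.functor (HoRel X)).map_comp _ _).symm.trans ?_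
    exact CategoryTheory.Quotient.sound (HoRel X)
      (HoRel.comp σ a b c hf1 hf0 hg1 hg0 hh1 hh0)

end Paper
end
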